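/- arXiv:2001.07007 — 4 statements merged into one kernel-verified Lean document; each statement's English description precedes it below -/
import Mathlib

section
/- Let X be a real separated locally convex space and f ∈ Γ(X). Then: (a) f is directionally coercive if and only if 0 ∈ qi cl(dom f*) (closure and quasi-interior taken in X* with the weak* topology); (b) f is essentially directionally coercive if and only if qi cl(dom f*) ≠ ∅. -/
open Filter Topology Set Pointwise TopologicalSpace

noncomputable section

section Defs

variable {E : Type*} [AddCommGroup E] [Module ℝ E]

/-- Recession function of `f` based at `x₀ ∈ dom f`, as the supremum of the
(nondecreasing) difference quotients `(f (x₀ + t • u) - f x₀) / t`, `t > 0`. -/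
def recAt (f : E → EReal) (x₀ u : E) : EReal :=
  ⨆ t ∈ Set.Ioi (0 : ℝ), ((t⁻¹ : ℝ) : EReal) * (f (x₀ + t • u) - f x₀)

/-- Sublinear function: positively homogeneous and subadditive. -/
def SublinearFn (g : E → EReal) : Prop :=
  g 0 = 0 ∧ (∀ x : E, ∀ t : ℝ, 0 < t → g (t • x) = (t : EReal) * g x) ∧
    ∀ x y : E, g (x + y) ≤ g x + g y

variable [TopologicalSpace E]

/-- `Γ(E)`: proper lower semicontinuous convex functions. -/
def GammaFn (f : E → EReal) : Prop :=
  (∃ x, f x ≠ ⊤) ∧ (∀ x, f x ≠ ⊥) ∧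
    Convex ℝ {p : E × ℝ | f p.1 ≤ (p.2 : EReal)} ∧ LowerSemicontinuous f

/-- Subdifferential at `0`, as a subset of the weak* dual. -/
def subdiff0 (g : E → EReal) : Set (WeakDual ℝ E) :=
  {xs | ∀ x, (xs x : EReal) ≤ g x}

/-- Fenchel conjugate. -/
def conjFn (f : E → EReal) (xs : WeakDual ℝ E) : EReal :=
  ⨆ x, ((xs x : EReal) - f x)

/-- Domain of the conjugate. -/
def domConj (f : E → EReal) : Set (WeakDual ℝ E) := {xs | conjFn f xs ≠ ⊤}

/-- `xs ∈ ∂f(x)`. -/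
def inSubdiff (f : E → EReal) (xs : WeakDual ℝ E) (x : E) : Prop :=
  f x ≠ ⊤ ∧ f x ≠ ⊥ ∧ ∀ x' : E, ((xs x' - xs x : ℝ) : EReal) + f x ≤ f x'

/-- Directionally coercive function. -/
def DirCoercive (f : E → EReal) : Prop :=
  ∀ x : E, ∀ u : E, u ≠ 0 → Filter.Tendsto (fun t : ℝ => f (x + t • u)) Filter.atTop (nhds ⊤)

/-- The set `L_{x*} = {x | g(x) = ⟨x, x*⟩ and g(-x) = -⟨x, x*⟩}`. -/
def LxSet (g : E → EReal) (xs : WeakDual ℝ E) : Set E :=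
  {x | g x = (xs x : EReal) ∧ g (-x) = ((-(xs x) : ℝ) : EReal)}

end Defs

section QRI

variable {F : Type*} [AddCommGroup F] [Module ℝ F] [TopologicalSpace F]

/-- The cone `ℝ₊ (A - a)`. -/
def coneGen (A : Set F) (a : F) : Set F :=
  {x | ∃ t : ℝ, 0 ≤ t ∧ ∃ b ∈ A, x = t • (b - a)}

/-- Quasi-relative interior. -/
def qri (A : Set F) : Set F :=
  {a ∈ A | ∃ S : Submodule ℝ F, closure (coneGen A a) = (S : Set F)}

/-- Quasi-interior. -/
def qi (A : Set F) : Set F :=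
  {a ∈ A | closure (coneGen A a) = Set.univ}

/-- Algebraic core of a set. -/
def coreSet (A : Set F) : Set F :=
  {a : F | ∀ u : F, ∃ δ : ℝ, 0 < δ ∧ ∀ t ∈ Set.Icc (0 : ℝ) δ, a + t • u ∈ A}

end QRI

set_option linter.unusedSectionVars false

lemma ereal_real {a : EReal} (h1 : a ≠ ⊥) (h2 : a ≠ ⊤) : ∃ r : ℝ, a = (r : EReal) := by
  lift a to ℝ using ⟨h2, h1⟩; exact ⟨a, rfl⟩

section Aux2
variable {X : Type*} [AddCommGroup X] [Module ℝ X] [TopologicalSpace X] [IsTopologicalAddGroup X]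
    [ContinuousSMul ℝ X] [LocallyConvexSpace ℝ X] [T2Space X]

instance weakDualLCS : LocallyConvexSpace ℝ (WeakDual ℝ X) := WeakBilin.locallyConvexSpace

/-- Every continuous linear functional on the weak* dual is an evaluation. -/
theorem eval_rep (φ : WeakDual ℝ X →L[ℝ] ℝ) : ∃ u : X, ∀ xs : WeakDual ℝ X, φ xs = xs u := by
  classical
  have hb := LinearMap.hasBasis_weakBilin (topDualPairing ℝ X)
  have hmem : φ ⁻¹' Metric.ball (0 : ℝ) 1 ∈ 𝓝 (0 : WeakDual ℝ X) := by
    have h := φ.continuous.continuousAt (x := 0)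
    rw [ContinuousAt, map_zero] at h
    exact h (Metric.ball_mem_nhds 0 one_pos)
  obtain ⟨U, hU, hUsub⟩ := hb.mem_iff.mp hmem
  obtain ⟨I, r, hr, rfl⟩ := (SeminormFamily.basisSets_iff _).mp hU
  have hker : ∀ xs : WeakDual ℝ X, (∀ x ∈ I, xs x = 0) → φ xs = 0 := by
    intro xs hxs
    by_contra h0
    have hballmem : ∀ c : ℝ, ((c • xs : WeakDual ℝ X) : X →L[ℝ] ℝ) ∈
        Seminorm.ball (I.sup ((topDualPairing ℝ X).toSeminormFamily)) 0 r := by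
      intro c
      refine (Seminorm.mem_ball_zero _).2 ?_
      refine Seminorm.finset_sup_apply_lt hr ?_
      intro i hi
      show ‖c * xs i‖ < r
      rw [hxs i hi, mul_zero, norm_zero]
      exact hr
    have habs : ∀ c : ℝ, |c * φ xs| < 1 := by
      intro c
      have h2 : c • xs ∈ φ ⁻¹' Metric.ball (0 : ℝ) 1 := hUsub (hballmem c)
      simp only [mem_preimage, Metric.mem_ball, Real.dist_eq, sub_zero, map_smul,
        smul_eq_mul] at h2
      exact h2
    have := habs (2 / |φ xs|)
    rw [abs_mul, abs_div, abs_abs, abs_two, div_mul_cancel₀ _ (abs_ne_zero.mpr h0)] at this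
    linarith
  let L : I → (WeakDual ℝ X →ₗ[ℝ] ℝ) := fun i =>
    { toFun := fun xs => xs (i : X)
      map_add' := fun a b => rfl
      map_smul' := fun c a => rfl }
  have hsub : (⨅ i : I, LinearMap.ker (L i)) ≤ LinearMap.ker (φ : WeakDual ℝ X →ₗ[ℝ] ℝ) := by
    intro xs hxs
    simp only [Submodule.mem_iInf, LinearMap.mem_ker] at hxs ⊢
    exact hker xs fun x hx => hxs ⟨x, hx⟩
  have hspan := mem_span_of_iInf_ker_le_ker hsub
  obtain ⟨c, hc⟩ := (Submodule.mem_span_range_iff_exists_fun ℝ).1 hspan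
  refine ⟨∑ i : I, c i • (i : X), fun xs => ?_⟩
  have h1 := LinearMap.congr_fun hc xs
  simp only [LinearMap.coe_sum, Finset.sum_apply, LinearMap.smul_apply,
    LinearMap.coe_mk, AddHom.coe_mk, smul_eq_mul, ContinuousLinearMap.coe_coe, L] at h1
  rw [← h1, map_sum]
  exact Finset.sum_congr rfl fun i _ => by rw [map_smul, smul_eq_mul]; rfl


theorem GammaFn.epi_closed {f : X → EReal} (hf : GammaFn f) :
    IsClosed {p : X × ℝ | f p.1 ≤ (p.2 : EReal)} := by
  rw [← isOpen_compl_iff, isOpen_iff_mem_nhds]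
  rintro ⟨x, a⟩ hp
  simp only [mem_compl_iff, mem_setOf_eq, not_le] at hp
  obtain ⟨m, hm1, hm2⟩ := EReal.exists_between_coe_real hp
  have h1 : {z : X | (m : EReal) < f z} ∈ 𝓝 x := hf.2.2.2 x m hm2
  have h2 : Iio m ∈ 𝓝 a := Iio_mem_nhds (EReal.coe_lt_coe_iff.1 hm1)
  rw [nhds_prod_eq]
  refine Filter.mem_of_superset (Filter.prod_mem_prod h1 h2) ?_
  rintro ⟨z, b⟩ ⟨hz, hb⟩
  simp only [mem_compl_iff, mem_setOf_eq, not_le]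
  exact lt_trans (EReal.coe_lt_coe_iff.2 hb) hz

theorem mem_domConj_iff {f : X → EReal} (hf : GammaFn f) (xs : WeakDual ℝ X) :
    xs ∈ domConj f ↔ ∃ β : ℝ, ∀ z, (xs z : EReal) - f z ≤ (β : EReal) := by
  constructor
  · intro h
    obtain ⟨x₁, hx₁⟩ := hf.1
    obtain ⟨r, hr⟩ := ereal_real (hf.2.1 x₁) hx₁
    have hne : conjFn f xs ≠ ⊥ := by
      intro hbot
      have hle : (xs x₁ : EReal) - f x₁ ≤ conjFn f xs :=
        le_iSup (fun x => (xs x : EReal) - f x) x₁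
      rw [hbot, le_bot_iff, hr, ← EReal.coe_sub] at hle
      exact EReal.coe_ne_bot _ hle
    obtain ⟨β, hβ⟩ := ereal_real hne h
    exact ⟨β, fun z => hβ ▸ le_iSup (fun x => (xs x : EReal) - f x) z⟩
  · rintro ⟨β, hβ⟩
    have : conjFn f xs ≤ (β : EReal) := iSup_le hβ
    exact fun htop => (htop ▸ this).not_gt (EReal.coe_lt_top β)

/-- Separation of a point below the epigraph. -/
theorem sep_epi {f : X → EReal} (hf : GammaFn f) {z₀ : X} {b₀ : ℝ}
    (hp : (z₀, b₀) ∉ {p : X × ℝ | f p.1 ≤ (p.2 : EReal)}) :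
    ∃ (φ₁ : X →L[ℝ] ℝ) (c s : ℝ), 0 ≤ c ∧ φ₁ z₀ + b₀ * c < s ∧
      ∀ z : X, ∀ rz : ℝ, f z = (rz : EReal) → s < φ₁ z + rz * c := by
  obtain ⟨φ, s, hφ1, hφ2⟩ := geometric_hahn_banach_point_closed hf.2.2.1 hf.epi_closed hp
  set c := φ (0, 1) with hcdef
  set φ₁ := φ.comp (ContinuousLinearMap.inl ℝ X ℝ) with hφ₁def
  have hdecomp : ∀ z : X, ∀ b : ℝ, φ (z, b) = φ₁ z + b * c := by
    intro z b
    have hzb : (z, b) = (z, (0:ℝ)) + b • ((0:X), (1:ℝ)) := by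
      simp [Prod.ext_iff]
    rw [hzb, map_add, map_smul, smul_eq_mul]
    rfl
  have hsep : ∀ z : X, ∀ rz : ℝ, f z = (rz : EReal) → s < φ₁ z + rz * c := by
    intro z rz hz
    have : (z, rz) ∈ {p : X × ℝ | f p.1 ≤ (p.2 : EReal)} := by
      simp only [mem_setOf_eq, hz, le_refl]
    have := hφ2 _ this
    rwa [hdecomp] at this
  obtain ⟨x₁, hx₁⟩ := hf.1
  obtain ⟨r, hr⟩ := ereal_real (hf.2.1 x₁) hx₁
  have hmem : ∀ n : ℝ, 0 ≤ n → s < φ₁ x₁ + (r + n) * c := by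
    intro n hn
    have hz : (x₁, r + n) ∈ {p : X × ℝ | f p.1 ≤ (p.2 : EReal)} := by
      simp only [mem_setOf_eq, hr]
      exact_mod_cast le_add_of_nonneg_right hn
    have := hφ2 _ hz
    rwa [hdecomp] at this
  have hc0 : 0 ≤ c := by
    by_contra hcneg
    push_neg at hcneg
    set n := max 0 ((φ₁ x₁ + r * c - s + 1) / (-c)) with hn
    have hn0 : 0 ≤ n := le_max_left _ _
    have h2 := hmem n hn0
    have h3 : (φ₁ x₁ + r * c - s + 1) / (-c) ≤ n := le_max_right _ _
    rw [div_le_iff₀ (by linarith : (0:ℝ) < -c)] at h3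
    nlinarith
  have h1 : φ₁ z₀ + b₀ * c < s := by rw [← hdecomp]; exact hφ1
  exact ⟨φ₁, c, s, hc0, h1, hsep⟩

/-- From the separation data with `c > 0`, produce an element of the conjugate domain. -/
theorem dual_of_sep {f : X → EReal} (hf : GammaFn f) {φ₁ : X →L[ℝ] ℝ} {c s : ℝ} (hc : 0 < c)
    (hsep : ∀ z : X, ∀ rz : ℝ, f z = (rz : EReal) → s < φ₁ z + rz * c) :
    ∃ xs ∈ domConj f, ∀ z : X, xs z = -c⁻¹ * φ₁ z := by
  refine ⟨show WeakDual ℝ X from (-c⁻¹) • φ₁, ?_, fun z => rfl⟩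
  rw [mem_domConj_iff hf]
  refine ⟨-(s/c), fun z => ?_⟩
  by_cases hz : f z = ⊤
  · rw [hz, EReal.sub_top]; exact bot_le
  obtain ⟨rz, hrz⟩ := ereal_real (hf.2.1 z) hz
  have hzap : ((show WeakDual ℝ X from (-c⁻¹) • φ₁) z : ℝ) = -c⁻¹ * φ₁ z := rfl
  rw [hrz, hzap, ← EReal.coe_sub, EReal.coe_le_coe_iff]
  have h := hsep z rz hrz
  have h2 : s / c < c⁻¹ * φ₁ z + rz := by
    rw [div_lt_iff₀ hc]
    calc s < φ₁ z + rz * c := h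
    _ = (c⁻¹ * φ₁ z + rz) * c := by field_simp
  linarith

theorem GammaFn.domConj_nonempty {f : X → EReal} (hf : GammaFn f) : ∃ xs, xs ∈ domConj f := by
  obtain ⟨x₁, hx₁⟩ := hf.1
  obtain ⟨r, hr⟩ := ereal_real (hf.2.1 x₁) hx₁
  have hp : (x₁, r - 1) ∉ {p : X × ℝ | f p.1 ≤ (p.2 : EReal)} := by
    simp only [mem_setOf_eq, hr]
    exact_mod_cast not_le.2 (by linarith : r - 1 < r)
  obtain ⟨φ₁, c, s, hc0, hlt, hsep⟩ := sep_epi hf hp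
  rcases eq_or_lt_of_le hc0 with hc | hc
  · exfalso
    have h1 := hsep x₁ r hr
    rw [← hc] at h1 hlt
    simp only [mul_zero, add_zero] at h1 hlt
    linarith
  · obtain ⟨xs, hxs, -⟩ := dual_of_sep hf hc hsep
    exact ⟨xs, hxs⟩

end Aux2
section Aux3
variable {X : Type*} [AddCommGroup X] [Module ℝ X] [TopologicalSpace X] [IsTopologicalAddGroup X]
    [ContinuousSMul ℝ X] [LocallyConvexSpace ℝ X] [T2Space X]

/-- Claim A: a direction nonpositive on `dom f*` is a recession direction. -/
theorem claimA {f : X → EReal} (hf : GammaFn f) {u : X}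
    (hu : ∀ xs ∈ domConj f, (xs u : ℝ) ≤ 0) :
    ∀ x : X, ∀ t : ℝ, 0 ≤ t → f (x + t • u) ≤ f x := by
  intro x t ht
  rcases eq_or_lt_of_le ht with rfl | ht
  · simp
  by_cases hx : f x = ⊤
  · rw [hx]; exact le_top
  obtain ⟨r, hr⟩ := ereal_real (hf.2.1 x) hx
  by_contra hlt
  push_neg at hlt
  have hp : (x + t • u, r) ∉ {p : X × ℝ | f p.1 ≤ (p.2 : EReal)} := by
    simp only [mem_setOf_eq, not_le]
    exact hr ▸ hlt
  obtain ⟨φ₁, c, s, hc0, hlt0, hsep⟩ := sep_epi hf hp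
  have hxmem : s < φ₁ x + r * c := hsep x r hr
  have happ : φ₁ (x + t • u) = φ₁ x + t * φ₁ u := by
    rw [map_add, map_smul, smul_eq_mul]
  rcases eq_or_lt_of_le hc0 with hc | hc
  · -- c = 0
    have hφu : φ₁ u < 0 := by
      rw [← hc] at hlt0 hxmem
      simp only [mul_zero, add_zero] at hlt0 hxmem
      rw [happ] at hlt0
      nlinarith
    obtain ⟨y0, hy0⟩ := hf.domConj_nonempty
    obtain ⟨β, hβ⟩ := (mem_domConj_iff hf y0).1 hy0
    have hmem : ∀ c' : ℝ, 0 < c' →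
        (y0 + show WeakDual ℝ X from (-c') • φ₁) ∈ domConj f := by
      intro c' hc'
      rw [mem_domConj_iff hf]
      refine ⟨β + c' * (-s), fun z => ?_⟩
      by_cases hz : f z = ⊤
      · rw [hz, EReal.sub_top]; exact bot_le
      obtain ⟨rz, hrz⟩ := ereal_real (hf.2.1 z) hz
      have h1 : y0 z - rz ≤ β := by
        have h1' := hβ z
        rw [hrz, ← EReal.coe_sub, EReal.coe_le_coe_iff] at h1'
        exact h1'
      have h2 : s < φ₁ z := by
        have := hsep z rz hrz
        rw [← hc, mul_zero, add_zero] at this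
        exact this
      have hzap : ((y0 + show WeakDual ℝ X from (-c') • φ₁) z : ℝ) = y0 z + (-c') * φ₁ z := rfl
      rw [hrz, hzap, ← EReal.coe_sub, EReal.coe_le_coe_iff]
      nlinarith
    have hφuneg : (0:ℝ) < -φ₁ u := by linarith
    set c' := (|y0 u| + 1) / (-φ₁ u) with hc'def
    have hc' : 0 < c' := div_pos (by positivity) hφuneg
    have heval := hu _ (hmem c' hc')
    have hevalap : ((y0 + show WeakDual ℝ X from (-c') • φ₁) u : ℝ) = y0 u + (-c') * φ₁ u := rfl
    rw [hevalap] at heval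
    have hcancel : c' * (-φ₁ u) = |y0 u| + 1 := div_mul_cancel₀ _ (ne_of_gt hφuneg)
    have := neg_abs_le (y0 u)
    nlinarith
  · -- c > 0
    obtain ⟨xs, hxsmem, hxs⟩ := dual_of_sep hf hc hsep
    have h0 := hu xs hxsmem
    rw [hxs u] at h0
    have hcinv : (0:ℝ) < c⁻¹ := inv_pos.2 hc
    have hφu : 0 ≤ φ₁ u := by nlinarith
    rw [happ] at hlt0
    nlinarith

theorem not_dirCoercive {f : X → EReal} (hf : GammaFn f) {u : X} (hu0 : u ≠ 0)
    (hu : ∀ xs ∈ domConj f, (xs u : ℝ) ≤ 0) : ¬ DirCoercive f := by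
  intro hdc
  obtain ⟨x₁, hx₁⟩ := hf.1
  have h := hdc x₁ u hu0
  have hev : ∀ᶠ t : ℝ in atTop, f x₁ < f (x₁ + t • u) :=
    h (Ioi_mem_nhds (lt_top_iff_ne_top.2 hx₁))
  obtain ⟨t, ht1, ht2⟩ := (hev.and (eventually_ge_atTop (0:ℝ))).exists
  exact absurd (claimA hf hu x₁ t ht2) (not_le.2 ht1)

theorem domConj_convex {f : X → EReal} (hf : GammaFn f) : Convex ℝ (domConj f) := by
  intro xs hxs ys hys p q hp hq hpq
  obtain ⟨β₁, hβ₁⟩ := (mem_domConj_iff hf xs).1 hxs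
  obtain ⟨β₂, hβ₂⟩ := (mem_domConj_iff hf ys).1 hys
  rw [mem_domConj_iff hf]
  refine ⟨p * β₁ + q * β₂, fun z => ?_⟩
  by_cases hz : f z = ⊤
  · rw [hz, EReal.sub_top]; exact bot_le
  obtain ⟨rz, hrz⟩ := ereal_real (hf.2.1 z) hz
  have h1 : xs z - rz ≤ β₁ := by
    have := hβ₁ z; rw [hrz, ← EReal.coe_sub, EReal.coe_le_coe_iff] at this; exact this
  have h2 : ys z - rz ≤ β₂ := by
    have := hβ₂ z; rw [hrz, ← EReal.coe_sub, EReal.coe_le_coe_iff] at this; exact this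
  have hzap : ((p • xs + q • ys) z : ℝ) = p * xs z + q * ys z := rfl
  rw [hrz, hzap, ← EReal.coe_sub, EReal.coe_le_coe_iff]
  have h3 : (p + q) * rz = rz := by rw [hpq, one_mul]
  nlinarith [mul_le_mul_of_nonneg_left h1 hp, mul_le_mul_of_nonneg_left h2 hq]

end Aux3
theorem coneGen_zero_convex {F : Type*} [AddCommGroup F] [Module ℝ F] [TopologicalSpace F]
    {A : Set F} (hA : Convex ℝ A) : Convex ℝ (coneGen A 0) := by
  rintro x ⟨t₁, ht₁, b₁, hb₁, rfl⟩ y ⟨t₂, ht₂, b₂, hb₂, rfl⟩ p q hp hq hpq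
  simp only [sub_zero]
  by_cases hs : p * t₁ + q * t₂ = 0
  · have h1 : p * t₁ = 0 ∧ q * t₂ = 0 := by
      constructor <;> nlinarith [mul_nonneg hp ht₁, mul_nonneg hq ht₂]
    refine ⟨0, le_refl 0, b₁, hb₁, ?_⟩
    simp [smul_smul, h1.1, h1.2]
  · have hσ : 0 < p * t₁ + q * t₂ :=
      lt_of_le_of_ne (by positivity) (Ne.symm hs)
    refine ⟨p * t₁ + q * t₂, le_of_lt hσ,
      (p * t₁ / (p * t₁ + q * t₂)) • b₁ + (q * t₂ / (p * t₁ + q * t₂)) • b₂,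
      hA hb₁ hb₂ (by positivity) (by positivity) (by field_simp), ?_⟩
    rw [sub_zero, smul_add, smul_smul, smul_smul, smul_smul, smul_smul,
      mul_div_cancel₀ _ (ne_of_gt hσ), mul_div_cancel₀ _ (ne_of_gt hσ)]

section PartA
variable {X : Type*} [AddCommGroup X] [Module ℝ X] [TopologicalSpace X] [IsTopologicalAddGroup X]
    [ContinuousSMul ℝ X] [LocallyConvexSpace ℝ X] [T2Space X]

theorem partA {f : X → EReal} (hf : GammaFn f) :
    DirCoercive f ↔ (0 : WeakDual ℝ X) ∈ qi (closure (domConj f)) := by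
  constructor
  · intro hdc
    obtain ⟨y0, hy0⟩ := hf.domConj_nonempty
    have hclconv : Convex ℝ (closure (domConj f)) := (domConj_convex hf).closure
    have h0mem : (0 : WeakDual ℝ X) ∈ closure (domConj f) := by
      by_contra h0
      obtain ⟨φ, s, h1, h2⟩ :=
        geometric_hahn_banach_point_closed hclconv isClosed_closure h0
      obtain ⟨u, hu⟩ := eval_rep φ
      rw [map_zero] at h1
      have hun : u ≠ 0 := by
        rintro rfl
        have h3 := h2 y0 (subset_closure hy0)
        rw [hu, map_zero] at h3
        linarith
      refine absurd hdc (not_dirCoercive hf (neg_ne_zero.2 hun) ?_)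
      intro xs hxs
      have h3 := h2 xs (subset_closure hxs)
      rw [hu] at h3
      rw [map_neg]
      linarith
    refine ⟨h0mem, ?_⟩
    by_contra hC
    obtain ⟨z, hz⟩ : ∃ z, z ∉ closure (coneGen (closure (domConj f)) 0) := by
      by_contra hh
      push_neg at hh
      exact hC (eq_univ_of_forall hh)
    obtain ⟨φ, s, h1, h2⟩ := geometric_hahn_banach_point_closed
      (coneGen_zero_convex hclconv).closure isClosed_closure hz
    obtain ⟨u, hu⟩ := eval_rep φ
    have h0cone : (0 : WeakDual ℝ X) ∈ coneGen (closure (domConj f)) 0 :=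
      ⟨0, le_refl 0, y0, subset_closure hy0, by simp⟩
    have hs : s < 0 := by
      have h3 := h2 0 (subset_closure h0cone)
      rw [map_zero] at h3
      linarith
    have hpos : ∀ xs ∈ domConj f, (0:ℝ) ≤ xs u := by
      intro xs hxs
      by_contra hneg
      push_neg at hneg
      have hmem : ∀ t : ℝ, 0 ≤ t → (t • xs) ∈ coneGen (closure (domConj f)) 0 :=
        fun t htt => ⟨t, htt, xs, subset_closure hxs, by simp⟩
      have htpos : 0 ≤ (s - 1) / xs u :=
        le_of_lt (div_pos_of_neg_of_neg (by linarith) hneg)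
      have h3 := h2 _ (subset_closure (hmem _ htpos))
      rw [hu] at h3
      have h4 : ((((s - 1) / xs u) • xs) u : ℝ) = ((s - 1) / xs u) * xs u := rfl
      rw [h4, div_mul_cancel₀ _ (ne_of_lt hneg)] at h3
      linarith
    have hun : u ≠ 0 := by
      rintro rfl
      have h3 := h2 0 (subset_closure h0cone)
      rw [map_zero] at h3
      rw [hu z, map_zero] at h1
      linarith
    refine absurd hdc (not_dirCoercive hf (neg_ne_zero.2 hun) ?_)
    intro xs hxs
    rw [map_neg]
    linarith [hpos xs hxs]
  · rintro ⟨h0cl, hcone⟩ x u hu0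
    rw [EReal.tendsto_nhds_top_iff_real]
    by_contra hnt
    push_neg at hnt
    obtain ⟨M, hM⟩ := hnt
    obtain ⟨t₁, ht₁, ht₁0⟩ := (hM.and_eventually (eventually_ge_atTop 0)).exists
    have hbound : ∀ t : ℝ, t₁ ≤ t → f (x + t • u) ≤ (M : EReal) := by
      intro t ht
      obtain ⟨t₂, ht₂, ht₂b⟩ := (hM.and_eventually (eventually_ge_atTop (t + 1))).exists
      have hd : 0 < t₂ - t₁ := by linarith
      set lam := (t - t₁) / (t₂ - t₁) with hlam
      have hlam0 : 0 ≤ lam := div_nonneg (by linarith) (le_of_lt hd)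
      have hlam1 : lam ≤ 1 := by
        rw [hlam, div_le_one hd]; linarith
      have hcomb := hf.2.2.1 (by exact ht₁ : (x + t₁ • u, M) ∈ _)
        (by exact ht₂ : (x + t₂ • u, M) ∈ _) (by linarith : (0:ℝ) ≤ 1 - lam) hlam0
        (by ring)
      have hpt : (1 - lam) • ((x + t₁ • u : X), M) + lam • ((x + t₂ • u : X), M)
          = ((x + t • u : X), M) := by
        have hlamt : (1 - lam) * t₁ + lam * t₂ = t := by
          have : lam * (t₂ - t₁) = t - t₁ := div_mul_cancel₀ _ (ne_of_gt hd)
          nlinarith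
        ext
        · show (1 - lam) • (x + t₁ • u) + lam • (x + t₂ • u) = x + t • u
          rw [smul_add, smul_add, smul_smul, smul_smul]
          rw [← hlamt]
          module
        · show (1 - lam) * M + lam * M = M
          ring
      rw [hpt] at hcomb
      exact hcomb
    have hdual : ∀ xs ∈ domConj f, (xs u : ℝ) ≤ 0 := by
      intro xs hxs
      obtain ⟨β, hβ⟩ := (mem_domConj_iff hf xs).1 hxs
      by_contra hpos0
      push_neg at hpos0
      set T := max t₁ ((β + M - xs x + 1) / xs u) with hT
      have hTt₁ : t₁ ≤ T := le_max_left _ _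
      have hfb := hbound T hTt₁
      have hfne : f (x + T • u) ≠ ⊤ := by
        intro h
        rw [h] at hfb
        exact absurd hfb (not_le.2 (EReal.coe_lt_top M))
      obtain ⟨rz, hrz⟩ := ereal_real (hf.2.1 _) hfne
      have hrzM : rz ≤ M := by
        rw [hrz] at hfb
        exact_mod_cast hfb
      have h1 : xs (x + T • u) - rz ≤ β := by
        have := hβ (x + T • u)
        rw [hrz, ← EReal.coe_sub, EReal.coe_le_coe_iff] at this
        exact this
      have h2 : xs (x + T • u) = xs x + T * xs u := by
        rw [map_add, map_smul, smul_eq_mul]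
      have h3 : (β + M - xs x + 1) / xs u ≤ T := le_max_right _ _
      rw [div_le_iff₀ hpos0] at h3
      nlinarith
    have hS : closure (coneGen (closure (domConj f)) 0) ⊆
        {xs : WeakDual ℝ X | (xs u : ℝ) ≤ 0} := by
      have hSclosed : IsClosed {xs : WeakDual ℝ X | (xs u : ℝ) ≤ 0} :=
        IsClosed.preimage (WeakDual.eval_continuous u) isClosed_Iic
      refine closure_minimal ?_ hSclosed
      rintro w ⟨tt, htt, b, hb, rfl⟩
      have hb' : (b u : ℝ) ≤ 0 := by
        have hsub : domConj f ⊆ {xs : WeakDual ℝ X | (xs u : ℝ) ≤ 0} := hdual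
        have := closure_mono hsub hb
        rwa [hSclosed.closure_eq] at this
      have h4 : ((tt • (b - 0)) u : ℝ) = tt * b u := by rw [sub_zero]; rfl
      simp only [mem_setOf_eq, h4]
      exact mul_nonpos_of_nonneg_of_nonpos htt hb'
    rw [hcone] at hS
    have hall : ∀ xs : WeakDual ℝ X, (xs u : ℝ) = 0 := by
      intro xs
      have h1 : (xs u : ℝ) ≤ 0 := hS (mem_univ xs)
      have h2 : ((-xs) u : ℝ) ≤ 0 := hS (mem_univ _)
      have h3 : ((-xs) u : ℝ) = -(xs u) := rfl
      rw [h3] at h2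
      linarith
    obtain ⟨g, hg⟩ := SeparatingDual.exists_ne_zero (R := ℝ) hu0
    exact hg (hall (show WeakDual ℝ X from g))

end PartA
section PartB
variable {X : Type*} [AddCommGroup X] [Module ℝ X] [TopologicalSpace X] [IsTopologicalAddGroup X]
    [ContinuousSMul ℝ X] [LocallyConvexSpace ℝ X] [T2Space X]

theorem Gamma_sub {f : X → EReal} (hf : GammaFn f) (xs : WeakDual ℝ X) :
    GammaFn (fun z => f z - (xs z : EReal)) := by
  obtain ⟨x₁, hx₁⟩ := hf.1
  obtain ⟨r, hr⟩ := ereal_real (hf.2.1 x₁) hx₁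
  refine ⟨⟨x₁, ?_⟩, ?_, ?_, ?_⟩
  · show f x₁ - (xs x₁ : EReal) ≠ ⊤
    rw [hr, ← EReal.coe_sub]
    exact EReal.coe_ne_top _
  · intro z
    show f z - (xs z : EReal) ≠ ⊥
    by_cases hz : f z = ⊤
    · rw [hz, EReal.top_sub_coe]
      exact top_ne_bot
    · obtain ⟨rz, hrz⟩ := ereal_real (hf.2.1 z) hz
      rw [hrz, ← EReal.coe_sub]
      exact EReal.coe_ne_bot _
  · show Convex ℝ {p : X × ℝ | f p.1 - (xs p.1 : EReal) ≤ (p.2 : EReal)}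
    have hset : {p : X × ℝ | f p.1 - (xs p.1 : EReal) ≤ (p.2 : EReal)} =
        (fun p : X × ℝ => ((p.1 : X), p.2 + xs p.1)) ⁻¹' {p : X × ℝ | f p.1 ≤ (p.2 : EReal)} := by
      ext ⟨z, b⟩
      simp only [mem_setOf_eq, mem_preimage]
      by_cases hz : f z = ⊤
      · rw [hz, EReal.top_sub_coe]
        simp only [top_le_iff]
        constructor
        · intro h; exact absurd h (EReal.coe_ne_top b)
        · intro h; exact absurd h (EReal.coe_ne_top _)
      · obtain ⟨rz, hrz⟩ := ereal_real (hf.2.1 z) hz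
        rw [hrz, ← EReal.coe_sub, EReal.coe_le_coe_iff, EReal.coe_le_coe_iff]
        constructor <;> intro h <;> linarith
    rw [hset]
    refine hf.2.2.1.is_linear_preimage ?_
    constructor
    · intro p q
      simp only [Prod.fst_add, Prod.snd_add, map_add, Prod.mk_add_mk]
      ring_nf
    · intro c p
      simp only [Prod.smul_fst, Prod.smul_snd, map_smul, smul_eq_mul, Prod.smul_mk]
      ring_nf
  · have hnb : ∀ z, f z - (xs z : EReal) ≠ ⊥ := by
      intro z
      by_cases hz : f z = ⊤
      · rw [hz, EReal.top_sub_coe]; exact top_ne_bot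
      · obtain ⟨rz, hrz⟩ := ereal_real (hf.2.1 z) hz
        rw [hrz, ← EReal.coe_sub]; exact EReal.coe_ne_bot _
    intro z₀ y hy
    change y < f z₀ - (xs z₀ : EReal) at hy
    induction y using EReal.rec with
    | bot =>
      exact Eventually.of_forall fun z =>
        (show (⊥:EReal) < f z - (xs z : EReal) from bot_lt_iff_ne_bot.2 (hnb z))
    | top => exact absurd hy not_top_lt
    | coe a =>
      have key : ((a + xs z₀ : ℝ) : EReal) < f z₀ := by
        by_cases hz : f z₀ = ⊤
        · rw [hz]; exact EReal.coe_lt_top _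
        · obtain ⟨r₀, hr₀⟩ := ereal_real (hf.2.1 z₀) hz
          rw [hr₀, EReal.coe_lt_coe_iff]
          rw [hr₀, ← EReal.coe_sub, EReal.coe_lt_coe_iff] at hy
          linarith
      obtain ⟨d, hd1, hd2⟩ := EReal.exists_between_coe_real key
      have h1 : ∀ᶠ z in 𝓝 z₀, (d : EReal) < f z := hf.2.2.2 z₀ d hd2
      have h2 : ∀ᶠ z in 𝓝 z₀, xs z < d - a := by
        refine Filter.Tendsto.eventually_lt_const ?_ ((map_continuous xs).tendsto z₀)
        rw [EReal.coe_lt_coe_iff] at hd1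
        linarith
      filter_upwards [h1, h2] with z hz1 hz2
      show (a : EReal) < f z - (xs z : EReal)
      by_cases hz : f z = ⊤
      · rw [hz, EReal.top_sub_coe]; exact EReal.coe_lt_top _
      · obtain ⟨rz, hrz⟩ := ereal_real (hf.2.1 z) hz
        rw [hrz] at hz1
        rw [EReal.coe_lt_coe_iff] at hz1
        rw [hrz, ← EReal.coe_sub, EReal.coe_lt_coe_iff]
        linarith

theorem domConj_sub {f : X → EReal} (hb : ∀ z, f z ≠ ⊥) (xs : WeakDual ℝ X) :
    domConj (fun z => f z - (xs z : EReal)) = (fun ys => ys + xs) ⁻¹' domConj f := by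
  have hkey : ∀ ys : WeakDual ℝ X,
      conjFn (fun z => f z - (xs z : EReal)) ys = conjFn f (ys + xs) := by
    intro ys
    unfold conjFn
    congr 1
    ext z
    show ((ys z : ℝ) : EReal) - (f z - (xs z : EReal)) = (((ys + xs) z : ℝ) : EReal) - f z
    have hys : ((ys + xs) z : ℝ) = ys z + xs z := rfl
    by_cases hz : f z = ⊤
    · rw [hz, EReal.top_sub_coe, EReal.sub_top, EReal.sub_top]
    · obtain ⟨r, hr⟩ := ereal_real (hb z) hz
      rw [hr, hys, ← EReal.coe_sub, ← EReal.coe_sub, ← EReal.coe_sub, EReal.coe_eq_coe_iff]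
      ring
  ext ys
  simp only [domConj, mem_setOf_eq, mem_preimage, hkey]

theorem coneGen_preimage {F : Type*} [AddCommGroup F] [Module ℝ F] [TopologicalSpace F]
    (A : Set F) (c : F) :
    coneGen ((fun y => y + c) ⁻¹' A) 0 = coneGen A c := by
  ext w
  constructor
  · rintro ⟨t, ht, b, hb, rfl⟩
    exact ⟨t, ht, b + c, hb, by simp⟩
  · rintro ⟨t, ht, b, hb, rfl⟩
    refine ⟨t, ht, b - c, ?_, by simp⟩
    simpa using hb

theorem partB_aux {f : X → EReal} (hf : GammaFn f) (xs : WeakDual ℝ X) :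
    ((0 : WeakDual ℝ X) ∈ qi (closure (domConj (fun z => f z - (xs z : EReal)))))
      ↔ xs ∈ qi (closure (domConj f)) := by
  rw [domConj_sub hf.2.1 xs]
  have hcl : closure ((fun ys : WeakDual ℝ X => ys + xs) ⁻¹' domConj f)
      = (fun ys : WeakDual ℝ X => ys + xs) ⁻¹' closure (domConj f) := by
    exact ((Homeomorph.addRight xs).preimage_closure (domConj f)).symm
  rw [hcl]
  unfold qi
  simp only [mem_setOf_eq, mem_preimage, zero_add]
  refine and_congr Iff.rfl ?_
  rw [coneGen_preimage]

end PartB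


variable {X : Type*}

theorem stmt12 [AddCommGroup X] [Module ℝ X] [TopologicalSpace X] [IsTopologicalAddGroup X]
    [ContinuousSMul ℝ X] [LocallyConvexSpace ℝ X] [T2Space X]
    (f : X → EReal) (hf : GammaFn f) :
    (DirCoercive f ↔ (0 : WeakDual ℝ X) ∈ qi (closure (domConj f))) ∧
    ((∃ xs : WeakDual ℝ X, DirCoercive (fun x => f x - (xs x : EReal))) ↔
      (qi (closure (domConj f))).Nonempty) := by
  refine ⟨partA hf, ?_, ?_⟩
  · rintro ⟨xs, hdc⟩
    exact ⟨xs, (partB_aux hf xs).1 ((partA (Gamma_sub hf xs)).1 hdc)⟩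
  · rintro ⟨xs, hxs⟩
    exact ⟨xs, (partA (Gamma_sub hf xs)).2 ((partB_aux hf xs).2 hxs)⟩
end
end

section
/- Let X and Y be real separated locally convex spaces, let h ∈ Γ(Y), let A : X → Y be a continuous linear operator, let x* ∈ X*, and suppose f := h ∘ A + x* (so f ∈ Γ(X) provided f is proper). Then: (a) f_∞ = h_∞ ∘ A + x* and ker A ⊆ {u : f_∞(u) = ⟨u, x*⟩}; (b) if h_∞ ≥ 0 then x* ∈ ∂f_∞(0) = cl(dom f*); conversely, if x* ∈ cl(dom f*) and A is surjective, then h_∞ ≥ 0; (c) if {y : h_∞(y) ≤ 0} = {0} then ker A = {u : f_∞(u) ≤ ⟨u, x*⟩} and x* ∈ qri cl(dom f*); conversely, if A is surjective and ker A = {u : f_∞(u) ≤ ⟨u, x*⟩}, then {y : h_∞(y) ≤ 0} = {0}; (d) if h is bounded from below then h_∞ ≥ 0 and x* ∈ dom f*; if A is surjective then inf h = −f*(x*), and h is bounded from below if and only if x* ∈ dom f*; (e) if A is surjective, then h attains its infimum on Y if and only if x* ∈ Im ∂f. -/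
open Filter Topology Set Pointwise TopologicalSpace

noncomputable section

section ERealAux

lemma ereal_add_coe_le_add_coe_iff {a b : EReal} (c : ℝ) : a + c ≤ b + c ↔ a ≤ b := by
  constructor
  · intro h
    have h2 : a + c - c ≤ b + c - c := EReal.sub_le_sub h le_rfl
    rwa [EReal.add_sub_cancel_right, EReal.add_sub_cancel_right] at h2
  · intro h; exact add_le_add_left h _

lemma ereal_iSup_add_coe {ι : Sort*} (g : ι → EReal) (c : ℝ) :
    (⨆ i, g i + (c : EReal)) = (⨆ i, g i) + c := by
  refine le_antisymm (iSup_le fun i => add_le_add_left (le_iSup g i) _) ?_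
  have h1 : (⨆ i, g i) ≤ (⨆ i, g i + (c : EReal)) - c := by
    refine iSup_le fun i => ?_
    have := EReal.sub_le_sub (le_iSup (fun i => g i + (c : EReal)) i) (le_refl (c : EReal))
    rwa [EReal.add_sub_cancel_right] at this
  exact EReal.add_le_of_le_sub h1

lemma ereal_iSup_neg {ι : Sort*} (g : ι → EReal) : (⨆ i, -(g i)) = -(⨅ i, g i) := by
  refine le_antisymm (iSup_le fun i => EReal.neg_le_neg_iff.mpr (iInf_le g i)) ?_
  rw [EReal.neg_le]
  exact le_iInf fun i => by rw [EReal.neg_le]; exact le_iSup (fun i => -(g i)) i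

/-- pointwise quotient identity -/
lemma ereal_quot_aux {t ρ c₁ c₂ : ℝ} (ht : 0 < t) {H : EReal} (hH : H ≠ ⊥) :
    ((t⁻¹ : ℝ) : EReal) * ((H + ((c₁ + t * c₂ : ℝ) : EReal)) - ((ρ + c₁ : ℝ) : EReal))
      = ((t⁻¹ : ℝ) : EReal) * (H - (ρ : EReal)) + (c₂ : ℝ) := by
  induction H using EReal.rec with
  | bot => exact absurd rfl hH
  | coe ρ' =>
      have ht' : t ≠ 0 := ne_of_gt ht
      norm_cast
      field_simp
      ring
  | top =>
      rw [EReal.top_add_coe, EReal.top_sub_coe, EReal.top_sub_coe,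
        EReal.coe_mul_top_of_pos (by positivity), EReal.top_add_coe]

end ERealAux

section RecAux

variable {E : Type*} [AddCommGroup E] [Module ℝ E]

lemma recAt_eq_iSup (f : E → EReal) (x₀ u : E) :
    recAt f x₀ u = ⨆ t : Set.Ioi (0 : ℝ),
      (((t : ℝ)⁻¹ : ℝ) : EReal) * (f (x₀ + (t : ℝ) • u) - f x₀) := by
  rw [recAt, iSup_subtype']

instance : Nonempty (Set.Ioi (0 : ℝ)) := ⟨⟨1, by norm_num⟩⟩

lemma recAt_self_zero (f : E → EReal) (x₀ : E) (ρ : ℝ) (h : f x₀ = ρ) :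
    recAt f x₀ 0 = 0 := by
  rw [recAt_eq_iSup]
  have : ∀ t : Set.Ioi (0 : ℝ),
      (((t : ℝ)⁻¹ : ℝ) : EReal) * (f (x₀ + (t : ℝ) • (0 : E)) - f x₀) = 0 := by
    intro t
    rw [smul_zero, add_zero, h]
    norm_cast
    simp
  simp only [this, iSup_const]

end RecAux
section RecComp

variable {X : Type*} {Y : Type*} [AddCommGroup X] [Module ℝ X] [TopologicalSpace X]
  [AddCommGroup Y] [Module ℝ Y] [TopologicalSpace Y]

lemma recAt_comp (h : Y → EReal) (hbot : ∀ y, h y ≠ ⊥) (A : X →L[ℝ] Y) (xs : WeakDual ℝ X)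
    (f : X → EReal) (hfdef : ∀ x, f x = h (A x) + ((xs x : ℝ) : EReal))
    (x₀ : X) (ρ : ℝ) (hρ : h (A x₀) = ρ) (u : X) :
    recAt f x₀ u = recAt h (A x₀) (A u) + ((xs u : ℝ) : EReal) := by
  rw [recAt_eq_iSup, recAt_eq_iSup, ← ereal_iSup_add_coe]
  refine iSup_congr fun t => ?_
  have ht : (0 : ℝ) < (t : ℝ) := t.2
  have hA : A (x₀ + (t : ℝ) • u) = A x₀ + (t : ℝ) • A u := by
    rw [map_add, map_smul]
  have hxs : xs (x₀ + (t : ℝ) • u) = xs x₀ + (t : ℝ) * xs u := by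
    rw [map_add, map_smul, smul_eq_mul]
  rw [hfdef, hfdef, hA, hxs, hρ]
  exact ereal_quot_aux ht (hbot _)

end RecComp
set_option linter.unusedSectionVars false

section FM

variable {E : Type*} [AddCommGroup E] [Module ℝ E] [TopologicalSpace E]
  [IsTopologicalAddGroup E] [ContinuousSMul ℝ E] [LocallyConvexSpace ℝ E]

/-- View a continuous linear functional as an element of the weak dual. -/
def toWD (ψ : E →L[ℝ] ℝ) : WeakDual ℝ E := ψ

lemma toWD_apply (ψ : E →L[ℝ] ℝ) (x : E) : toWD ψ x = ψ x := rfl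

lemma wd_add_apply (z w : WeakDual ℝ E) (x : E) : (z + w) x = z x + w x := rfl

lemma wd_sub_apply (z w : WeakDual ℝ E) (x : E) : (z - w) x = z x - w x := rfl

lemma wd_smul_apply (c : ℝ) (z : WeakDual ℝ E) (x : E) : (c • z) x = c * z x := rfl

lemma isClosed_ereal_epi {f : E → EReal} (hlsc : LowerSemicontinuous f) :
    IsClosed {p : E × ℝ | f p.1 ≤ (p.2 : EReal)} := by
  have h1 : IsClosed {p : E × EReal | f p.1 ≤ p.2} := hlsc.isClosed_epigraph
  have h2 : Continuous (fun p : E × ℝ => ((p.1, (p.2 : EReal)) : E × EReal)) :=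
    continuous_fst.prodMk (continuous_coe_real_ereal.comp continuous_snd)
  exact h1.preimage h2

/-- Separation of a point below the (closed convex) epigraph. -/
lemma sep_epi_s13 (f : E → EReal)
    (hepi : Convex ℝ {p : E × ℝ | f p.1 ≤ (p.2 : EReal)})
    (hlsc : LowerSemicontinuous f)
    (x₁ : E) (r₁ : ℝ) (hx₁ : f x₁ ≤ (r₁ : EReal))
    {xb : E} {μ : ℝ} (hμ : ¬ f xb ≤ (μ : EReal)) :
    ∃ (ψ : E →L[ℝ] ℝ) (β u : ℝ), β ≤ 0 ∧
      (∀ x : E, ∀ r : ℝ, f x ≤ (r : EReal) → ψ x + β * r < u) ∧ u < ψ xb + β * μ := by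
  obtain ⟨φ, u, hS, hP⟩ := geometric_hahn_banach_closed_point (E := E × ℝ)
    (x := ((xb, μ) : E × ℝ)) hepi (isClosed_ereal_epi hlsc) hμ
  set ψ : E →L[ℝ] ℝ := φ.comp (ContinuousLinearMap.inl ℝ E ℝ) with hψ
  set β : ℝ := φ (0, 1) with hβ
  have hdecomp : ∀ x : E, ∀ r : ℝ, φ (x, r) = ψ x + β * r := by
    intro x r
    have : (x, r) = (x, (0 : ℝ)) + r • ((0 : E), (1 : ℝ)) := by
      simp [Prod.ext_iff]
    rw [this, map_add, map_smul]
    simp [hψ, hβ, mul_comm]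
  have hβ0 : β ≤ 0 := by
    by_contra hpos
    push_neg at hpos
    set t : ℝ := max 0 ((u - ψ x₁ - β * r₁) / β) with htdef
    have ht : 0 ≤ t := le_max_left _ _
    have hmem : f x₁ ≤ ((r₁ + t : ℝ) : EReal) := le_trans hx₁ (by exact_mod_cast by linarith)
    have := hS (x₁, r₁ + t) hmem
    rw [hdecomp] at this
    have h2 : (u - ψ x₁ - β * r₁) / β ≤ t := le_max_right _ _
    rw [div_le_iff₀ hpos] at h2
    nlinarith
  refine ⟨ψ, β, u, hβ0, fun x r hr => ?_, ?_⟩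
  · have := hS (x, r) hr
    rwa [hdecomp] at this
  · have := hP
    rwa [hdecomp] at this

lemma conjFn_le_of_forall {f : E → EReal} (hbot : ∀ x, f x ≠ ⊥) {z : WeakDual ℝ E} {c : ℝ}
    (hb : ∀ x : E, ∀ r : ℝ, f x = (r : EReal) → z x - r ≤ c) :
    conjFn f z ≤ (c : EReal) := by
  refine iSup_le fun x => ?_
  rcases eq_or_ne (f x) ⊤ with htop | htop
  · rw [htop, EReal.sub_top]; exact bot_le
  · have hreal : f x = ((f x).toReal : EReal) := (EReal.coe_toReal htop (hbot x)).symm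
    rw [hreal]
    exact_mod_cast hb x _ hreal

/-- Existence of an affine minorant: the domain of the conjugate is nonempty,
with an explicit real bound. -/
lemma exists_conj_bound (f : E → EReal)
    (hepi : Convex ℝ {p : E × ℝ | f p.1 ≤ (p.2 : EReal)})
    (hlsc : LowerSemicontinuous f) (hbot : ∀ x, f x ≠ ⊥)
    (x₁ : E) (hx₁ : f x₁ ≠ ⊤) :
    ∃ (z : WeakDual ℝ E) (c : ℝ), conjFn f z ≤ (c : EReal) := by
  set r₁ : ℝ := (f x₁).toReal with hr₁def
  have hr₁ : f x₁ = (r₁ : EReal) := (EReal.coe_toReal hx₁ (hbot x₁)).symm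
  have hμ : ¬ f x₁ ≤ ((r₁ - 1 : ℝ) : EReal) := by
    rw [hr₁]; exact_mod_cast by norm_num
  obtain ⟨ψ, β, u, hβ0, h1, h2⟩ := sep_epi_s13 f hepi hlsc x₁ r₁ hr₁.le hμ
  have hβneg : β < 0 := by
    have ha := h1 x₁ r₁ hr₁.le
    nlinarith
  refine ⟨toWD ((-β)⁻¹ • ψ), (-β)⁻¹ * u, conjFn_le_of_forall hbot fun x r hr => ?_⟩
  have := h1 x r hr.le
  rw [toWD_apply, ContinuousLinearMap.smul_apply, smul_eq_mul]
  have hb : (0 : ℝ) < -β := by linarith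
  have h' := mul_lt_mul_of_pos_left this (inv_pos.mpr hb)
  have hβne : β ≠ 0 := ne_of_lt hβneg
  have k : (-β)⁻¹ * β = -1 := by field_simp
  have expand : (-β)⁻¹ * (ψ x + β * r) = (-β)⁻¹ * ψ x + (-β)⁻¹ * β * r := by ring
  rw [k] at expand
  rw [expand] at h'
  linarith

end FM
section FM2

set_option linter.unusedSectionVars false

variable {E : Type*} [AddCommGroup E] [Module ℝ E] [TopologicalSpace E]
  [IsTopologicalAddGroup E] [ContinuousSMul ℝ E] [LocallyConvexSpace ℝ E]

lemma conj_smul_bound {f : E → EReal} (hbot : ∀ x, f x ≠ ⊥) {ψ : E →L[ℝ] ℝ} {β u : ℝ}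
    (hβneg : β < 0) (h1 : ∀ x : E, ∀ r : ℝ, f x ≤ (r : EReal) → ψ x + β * r < u) :
    conjFn f (toWD ((-β)⁻¹ • ψ)) ≤ (((-β)⁻¹ * u : ℝ) : EReal) := by
  refine conjFn_le_of_forall hbot fun x r hr => ?_
  have h0 := h1 x r hr.le
  rw [toWD_apply, ContinuousLinearMap.smul_apply, smul_eq_mul]
  have hb : (0 : ℝ) < -β := by linarith
  have h' := mul_lt_mul_of_pos_left h0 (inv_pos.mpr hb)
  have hβne : β ≠ 0 := ne_of_lt hβneg
  have k : (-β)⁻¹ * β = -1 := by field_simp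
  have expand : (-β)⁻¹ * (ψ x + β * r) = (-β)⁻¹ * ψ x + (-β)⁻¹ * β * r := by ring
  rw [k] at expand
  rw [expand] at h'
  linarith

/-- Fenchel–Moreau: a proper convex lower semicontinuous function is bounded above by
its biconjugate. -/
lemma fenchel_moreau (f : E → EReal)
    (hepi : Convex ℝ {p : E × ℝ | f p.1 ≤ (p.2 : EReal)})
    (hlsc : LowerSemicontinuous f) (hbot : ∀ x, f x ≠ ⊥)
    (x₁ : E) (hx₁ : f x₁ ≠ ⊤) (x : E) :
    f x ≤ ⨆ z : WeakDual ℝ E, ((z x : EReal) - conjFn f z) := by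
  by_contra hcon
  push_neg at hcon
  obtain ⟨μ, hμ1, hμ2⟩ := EReal.lt_iff_exists_real_btwn.mp hcon
  set r₁ : ℝ := (f x₁).toReal with hr₁def
  have hr₁ : f x₁ = (r₁ : EReal) := (EReal.coe_toReal hx₁ (hbot x₁)).symm
  obtain ⟨ψ, β, u, hβ0, h1, h2⟩ := sep_epi_s13 f hepi hlsc x₁ r₁ hr₁.le (not_le.mpr hμ2)
  rcases lt_or_eq_of_le hβ0 with hβneg | hβz
  · -- β < 0
    set z := toWD ((-β)⁻¹ • ψ) with hz
    have hconj := conj_smul_bound hbot hβneg h1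
    have hub : ((z x : ℝ) : EReal) - (((-β)⁻¹ * u : ℝ) : EReal)
        ≤ ⨆ w : WeakDual ℝ E, ((w x : EReal) - conjFn f w) :=
      le_trans (EReal.sub_le_sub le_rfl hconj) (le_iSup (fun w : WeakDual ℝ E =>
        ((w x : EReal) - conjFn f w)) z)
    have hzx : z x = (-β)⁻¹ * ψ x := by
      rw [hz, toWD_apply, ContinuousLinearMap.smul_apply, smul_eq_mul]
    have hb : (0 : ℝ) < -β := by linarith
    have h' := mul_lt_mul_of_pos_left h2 (inv_pos.mpr hb)
    have hβne : β ≠ 0 := ne_of_lt hβneg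
    have k : (-β)⁻¹ * β = -1 := by field_simp
    have expand : (-β)⁻¹ * (ψ x + β * μ) = (-β)⁻¹ * ψ x + (-β)⁻¹ * β * μ := by ring
    rw [k] at expand
    rw [expand] at h'
    have hre : μ < z x - (-β)⁻¹ * u := by rw [hzx]; linarith
    have : (μ : EReal) < ⨆ w : WeakDual ℝ E, ((w x : EReal) - conjFn f w) := by
      refine lt_of_lt_of_le ?_ hub
      rw [← EReal.coe_sub]
      exact_mod_cast hre
    exact absurd (this.trans hμ1) (lt_irrefl _)
  · -- β = 0
    subst hβz
    have h1' : ∀ x' : E, ∀ r : ℝ, f x' ≤ (r : EReal) → ψ x' < u := by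
      intro x' r hr; have := h1 x' r hr; simpa using this
    have h2' : u < ψ x := by simpa using h2
    obtain ⟨z₀, c₀, hz₀⟩ := exists_conj_bound f hepi hlsc hbot x₁ hx₁
    have hψu : (0 : ℝ) < ψ x - u := by linarith
    set lam : ℝ := max 0 ((μ + 1 + c₀ - z₀ x) / (ψ x - u)) with hlamdef
    have hlam0 : (0 : ℝ) ≤ lam := le_max_left _ _
    have hlam : μ + 1 + c₀ - z₀ x ≤ lam * (ψ x - u) := by
      have hmr := le_max_right 0 ((μ + 1 + c₀ - z₀ x) / (ψ x - u))
      calc μ + 1 + c₀ - z₀ x = ((μ + 1 + c₀ - z₀ x) / (ψ x - u)) * (ψ x - u) := by field_simp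
        _ ≤ lam * (ψ x - u) := mul_le_mul_of_nonneg_right hmr hψu.le
    set z : WeakDual ℝ E := z₀ + toWD (lam • ψ) with hzdef
    have hzx : ∀ x' : E, z x' = z₀ x' + lam * ψ x' := by
      intro x'
      rw [hzdef, wd_add_apply, toWD_apply, ContinuousLinearMap.smul_apply, smul_eq_mul]
    have hconj : conjFn f z ≤ ((c₀ + lam * u : ℝ) : EReal) := by
      refine conjFn_le_of_forall hbot fun x' r hr => ?_
      have hz₀x' : z₀ x' - r ≤ c₀ := by
        have hh : ((z₀ x' : ℝ) : EReal) - f x' ≤ conjFn f z₀ :=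
          le_iSup (fun w => ((z₀ w : ℝ) : EReal) - f w) x'
        rw [hr, ← EReal.coe_sub] at hh
        exact_mod_cast hh.trans hz₀
      have hψx' : ψ x' < u := h1' x' r hr.le
      rw [hzx x']
      nlinarith [mul_le_mul_of_nonneg_left hψx'.le hlam0]
    have hub : ((z x : ℝ) : EReal) - ((c₀ + lam * u : ℝ) : EReal)
        ≤ ⨆ w : WeakDual ℝ E, ((w x : EReal) - conjFn f w) :=
      le_trans (EReal.sub_le_sub le_rfl hconj) (le_iSup (fun w : WeakDual ℝ E =>
        ((w x : EReal) - conjFn f w)) z)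
    have hre : μ < z x - (c₀ + lam * u) := by rw [hzx x]; nlinarith
    have : (μ : EReal) < ⨆ w : WeakDual ℝ E, ((w x : EReal) - conjFn f w) := by
      refine lt_of_lt_of_le ?_ hub
      rw [← EReal.coe_sub]
      exact_mod_cast hre
    exact absurd (this.trans hμ1) (lt_irrefl _)

end FM2
section DW

set_option linter.unusedSectionVars false

variable {E : Type*} [AddCommGroup E] [Module ℝ E] [TopologicalSpace E]

/-- Every continuous linear functional on the weak-* dual is an evaluation. -/
lemma weakdual_dual_eval (φ : WeakDual ℝ E →L[ℝ] ℝ) :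
    ∃ u : E, ∀ z : WeakDual ℝ E, φ z = z u := by
  classical
  set B := topDualPairing ℝ E with hB
  have hnb : φ ⁻¹' (Set.Ioo (-1 : ℝ) 1) ∈ 𝓝 (0 : WeakDual ℝ E) := by
    have := φ.continuous.continuousAt (x := (0 : WeakDual ℝ E))
    apply this.preimage_mem_nhds
    rw [map_zero]
    exact Ioo_mem_nhds (by norm_num) (by norm_num)
  obtain ⟨U, hU, hUsub⟩ := (LinearMap.hasBasis_weakBilin B).mem_iff.mp hnb
  obtain ⟨s, r, hr, rfl⟩ := (B.toSeminormFamily.basisSets_iff).mp hU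
  have hker : ∀ z : WeakDual ℝ E, (∀ x ∈ s, z x = 0) → φ z = 0 := by
    intro z hz
    by_contra hφz
    have hmem : ∀ c : ℝ, c • z ∈ Seminorm.ball (s.sup B.toSeminormFamily) 0 r := by
      intro c
      apply (Seminorm.mem_ball_zero (s.sup B.toSeminormFamily)).mpr
      refine Seminorm.finset_sup_apply_lt hr fun i hi => ?_
      have hzi : z i = 0 := hz i hi
      show ‖(B (c • z)) i‖ < r
      have hcz : (B (c • z)) i = c * z i := rfl
      rw [hcz, hzi, mul_zero, norm_zero]
      exact hr
    have hφc : ∀ c : ℝ, φ (c • z) ∈ Set.Ioo (-1 : ℝ) 1 := fun c => hUsub (hmem c)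
    have h2 := hφc (2 / φ z)
    rw [map_smul, smul_eq_mul] at h2
    rw [div_mul_cancel₀ 2 hφz] at h2
    exact absurd h2.2 (by norm_num)
  -- linear algebra: φ is a combination of evaluations
  set L : s → (WeakDual ℝ E →ₗ[ℝ] ℝ) := fun i => B.flip (i : E) with hL
  have hsub : ⨅ i : s, LinearMap.ker (L i) ≤ LinearMap.ker (φ : WeakDual ℝ E →ₗ[ℝ] ℝ) := by
    intro z hz
    rw [Submodule.mem_iInf] at hz
    have : ∀ x ∈ s, z x = 0 := by
      intro x hx
      have := hz ⟨x, hx⟩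
      rwa [LinearMap.mem_ker] at this
    exact hker z this
  have hspan := mem_span_of_iInf_ker_le_ker hsub
  obtain ⟨c, hc⟩ := (Submodule.mem_span_range_iff_exists_fun ℝ).mp hspan
  refine ⟨∑ i ∈ Finset.univ, c i • ((i : s) : E), fun z => ?_⟩
  have := DFunLike.congr_fun hc z
  simp only [LinearMap.coe_sum, Finset.sum_apply, LinearMap.smul_apply, smul_eq_mul] at this
  rw [ContinuousLinearMap.coe_coe] at this
  rw [← this]
  rw [map_sum]
  refine Finset.sum_congr rfl fun i _ => ?_
  rw [map_smul, smul_eq_mul]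
  rfl

end DW
section ConvexAnalysis

set_option linter.unusedSectionVars false

variable {E : Type*} [AddCommGroup E] [Module ℝ E] [TopologicalSpace E]
  [IsTopologicalAddGroup E] [ContinuousSMul ℝ E] [LocallyConvexSpace ℝ E]

instance : LocallyConvexSpace ℝ (WeakDual ℝ E) := WeakBilin.locallyConvexSpace

lemma isClosed_subdiff0 (g : E → EReal) : IsClosed (subdiff0 (E := E) g) := by
  have hrw : subdiff0 (E := E) g = ⋂ x : E, {z : WeakDual ℝ E | ((z x : ℝ) : EReal) ≤ g x} := by
    ext z; simp [subdiff0, Set.mem_iInter]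
  rw [hrw]
  refine isClosed_iInter fun x => ?_
  have hc : Continuous fun z : WeakDual ℝ E => ((z x : ℝ) : EReal) :=
    continuous_coe_real_ereal.comp (WeakBilin.eval_continuous (topDualPairing ℝ E) x)
  exact isClosed_le hc continuous_const

lemma domConj_subset_subdiff0 (f : E → EReal) (hbot : ∀ x, f x ≠ ⊥)
    (x₀ : E) (r₀ : ℝ) (hr₀ : f x₀ = (r₀ : EReal)) :
    domConj f ⊆ subdiff0 (recAt f x₀) := by
  intro z hz u
  by_contra hcon
  push_neg at hcon
  obtain ⟨ν, hν1, hν2'⟩ := EReal.lt_iff_exists_real_btwn.mp hcon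
  have hν2 : ν < z u := EReal.coe_lt_coe_iff.mp hν2'
  have hc : conjFn f z ≤ (((conjFn f z).toReal : ℝ) : EReal) := EReal.le_coe_toReal hz
  set c : ℝ := (conjFn f z).toReal with hcdef
  set C : ℝ := c - z x₀ + r₀ with hCdef
  have hzuν : (0:ℝ) < z u - ν := by linarith
  set t : ℝ := max 1 (C / (z u - ν) + 1) with htdef
  have ht1 : (1:ℝ) ≤ t := le_max_left _ _
  have ht0 : (0:ℝ) < t := lt_of_lt_of_le one_pos ht1
  have htC : C / (z u - ν) < t := lt_of_lt_of_le (by linarith) (le_max_right _ _)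
  have htC' : C < t * (z u - ν) := by rw [div_lt_iff₀ hzuν] at htC; linarith
  have hq : ((t⁻¹ : ℝ) : EReal) * (f (x₀ + t • u) - f x₀) ≤ recAt f x₀ u :=
    le_iSup₂ (f := fun (t : ℝ) (_ : t ∈ Set.Ioi (0:ℝ)) =>
      ((t⁻¹ : ℝ) : EReal) * (f (x₀ + t • u) - f x₀)) t (Set.mem_Ioi.mpr ht0)
  have hft : f (x₀ + t • u) ≠ ⊤ := by
    intro htop
    rw [htop, hr₀, EReal.top_sub_coe, EReal.coe_mul_top_of_pos (by positivity)] at hq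
    exact absurd (lt_of_le_of_lt hq hν1) (by simp)
  set rt : ℝ := (f (x₀ + t • u)).toReal with hrtdef
  have hrt : f (x₀ + t • u) = (rt : EReal) := (EReal.coe_toReal hft (hbot _)).symm
  have hq2 : t⁻¹ * (rt - r₀) < ν := by
    have hcoe : ((t⁻¹ * (rt - r₀) : ℝ) : EReal) ≤ recAt f x₀ u := by
      rw [hr₀, hrt] at hq
      push_cast
      exact hq
    exact EReal.coe_lt_coe_iff.mp (lt_of_le_of_lt hcoe hν1)
  have hzb : z (x₀ + t • u) - rt ≤ c := by
    have h3 : ((z (x₀ + t • u) : ℝ) : EReal) - f (x₀ + t • u) ≤ conjFn f z :=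
      le_iSup (fun x => ((z x : ℝ) : EReal) - f x) _
    rw [hrt, ← EReal.coe_sub] at h3
    exact_mod_cast h3.trans hc
  have hzx : z (x₀ + t • u) = z x₀ + t * z u := by rw [map_add, map_smul, smul_eq_mul]
  rw [hzx] at hzb
  have hti : (0:ℝ) < t⁻¹ := inv_pos.mpr ht0
  have k : t⁻¹ * t = 1 := inv_mul_cancel₀ (ne_of_gt ht0)
  have e1 : t⁻¹ * C < z u - ν := by
    have := mul_lt_mul_of_pos_left htC' hti
    rwa [← mul_assoc, k, one_mul] at this
  have e2 : z u ≤ t⁻¹ * C + t⁻¹ * (rt - r₀) := by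
    have h5 := mul_le_mul_of_nonneg_left hzb (le_of_lt hti)
    have h6 : t⁻¹ * (z x₀ + t * z u - rt) = t⁻¹ * z x₀ + t⁻¹ * t * z u - t⁻¹ * rt := by ring
    rw [h6, k, one_mul] at h5
    have h7 : t⁻¹ * C + t⁻¹ * (rt - r₀) = t⁻¹ * c - t⁻¹ * z x₀ + t⁻¹ * rt := by
      rw [hCdef]; ring
    rw [h7]
    linarith
  linarith

/-- The key (support function) bound: the recession function is at most the
supremum of evaluations over the domain of the conjugate. -/
lemma recAt_le_biSup (f : E → EReal)
    (hepi : Convex ℝ {p : E × ℝ | f p.1 ≤ (p.2 : EReal)})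
    (hlsc : LowerSemicontinuous f) (hbot : ∀ x, f x ≠ ⊥)
    (x₀ : E) (r₀ : ℝ) (hr₀ : f x₀ = (r₀ : EReal)) (u : E) :
    recAt f x₀ u ≤ ⨆ z ∈ domConj f, ((z u : ℝ) : EReal) := by
  obtain ⟨z₀, c₀, hz₀⟩ := exists_conj_bound f hepi hlsc hbot x₀ (by rw [hr₀]; exact EReal.coe_ne_top r₀)
  have hz₀mem : z₀ ∈ domConj f := by
    show conjFn f z₀ ≠ ⊤
    intro htop
    rw [htop] at hz₀
    exact EReal.coe_ne_top c₀ (top_le_iff.mp hz₀)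
  set S : EReal := ⨆ z ∈ domConj f, ((z u : ℝ) : EReal) with hSdef
  rcases eq_or_ne S ⊤ with hS | hS
  · rw [hS]; exact le_top
  · have hSlb : ((z₀ u : ℝ) : EReal) ≤ S :=
      le_iSup₂ (f := fun (z : WeakDual ℝ E) (_ : z ∈ domConj f) => ((z u : ℝ) : EReal)) z₀ hz₀mem
    have hSbot : S ≠ ⊥ := fun hb => by
      rw [hb] at hSlb; exact (EReal.coe_ne_bot _) (le_bot_iff.mp hSlb)
    set s : ℝ := S.toReal with hsdef
    have hs : S = (s : EReal) := (EReal.coe_toReal hS hSbot).symm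
    rw [hs]
    rw [recAt_eq_iSup]
    refine iSup_le fun tt => ?_
    obtain ⟨t, ht0⟩ := tt
    simp only
    have ht0' : (0:ℝ) < t := ht0
    have hfm := fenchel_moreau f hepi hlsc hbot x₀
      (by rw [hr₀]; exact EReal.coe_ne_top r₀) (x₀ + t • u)
    have hbound : (⨆ z : WeakDual ℝ E, ((z (x₀ + t • u) : EReal) - conjFn f z))
        ≤ ((r₀ + t * s : ℝ) : EReal) := by
      refine iSup_le fun z => ?_
      rcases eq_or_ne (conjFn f z) ⊤ with hzt | hzt
      · rw [hzt, EReal.sub_top]; exact bot_le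
      · have hzmem : z ∈ domConj f := hzt
        have hge : ((z x₀ - r₀ : ℝ) : EReal) ≤ conjFn f z := by
          have := le_iSup (fun x => ((z x : ℝ) : EReal) - f x) x₀
          rwa [hr₀, ← EReal.coe_sub] at this
        have hzbot : conjFn f z ≠ ⊥ := fun hb => by
          rw [hb] at hge; exact (EReal.coe_ne_bot _) (le_bot_iff.mp hge)
        set cz : ℝ := (conjFn f z).toReal with hczdef
        have hcz : conjFn f z = (cz : EReal) := (EReal.coe_toReal hzt hzbot).symm
        have h1 : z x₀ - r₀ ≤ cz := by rw [hcz] at hge; exact_mod_cast hge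
        have h2 : z u ≤ s := by
          have hb2 : ((z u : ℝ) : EReal) ≤ S := hSdef ▸
            le_iSup₂ (f := fun (z : WeakDual ℝ E) (_ : z ∈ domConj f) => ((z u : ℝ) : EReal)) z hzmem
          rw [hs] at hb2
          exact_mod_cast hb2
        have hzval : z (x₀ + t • u) = z x₀ + t * z u := by rw [map_add, map_smul, smul_eq_mul]
        rw [hzval, hcz, ← EReal.coe_sub]
        exact_mod_cast (by nlinarith [mul_le_mul_of_nonneg_left h2 (le_of_lt ht0')] :
          z x₀ + t * z u - cz ≤ r₀ + t * s)
    have hf : f (x₀ + t • u) ≤ ((r₀ + t * s : ℝ) : EReal) := hfm.trans hbound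
    have hft : f (x₀ + t • u) ≠ ⊤ := fun htop => by
      rw [htop] at hf; exact (EReal.coe_ne_top _) (top_le_iff.mp hf)
    set rt : ℝ := (f (x₀ + t • u)).toReal with hrtdef
    have hrt : f (x₀ + t • u) = (rt : EReal) := (EReal.coe_toReal hft (hbot _)).symm
    have hrts : rt ≤ r₀ + t * s := by rw [hrt] at hf; exact_mod_cast hf
    rw [hrt, hr₀, ← EReal.coe_sub, ← EReal.coe_mul]
    have k : t⁻¹ * t = 1 := inv_mul_cancel₀ (ne_of_gt ht0')
    have h6 := mul_le_mul_of_nonneg_left (show rt - r₀ ≤ t * s by linarith)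
      (le_of_lt (inv_pos.mpr ht0'))
    rw [← mul_assoc, k, one_mul] at h6
    exact_mod_cast h6

/-- `∂f_∞(0) = cl (dom f*)`. -/
lemma subdiff0_recAt_eq_closure_domConj (f : E → EReal)
    (hepi : Convex ℝ {p : E × ℝ | f p.1 ≤ (p.2 : EReal)})
    (hlsc : LowerSemicontinuous f) (hbot : ∀ x, f x ≠ ⊥)
    (x₀ : E) (r₀ : ℝ) (hr₀ : f x₀ = (r₀ : EReal))
    (hdomconv : Convex ℝ (domConj f)) :
    subdiff0 (recAt f x₀) = closure (domConj f) := by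
  apply Set.Subset.antisymm
  · intro z hz
    by_contra hcl
    obtain ⟨φ, u₀, hlt, hgt⟩ := geometric_hahn_banach_closed_point (E := WeakDual ℝ E)
      (x := z) hdomconv.closure isClosed_closure hcl
    obtain ⟨v, hv⟩ := weakdual_dual_eval φ
    have hS : (⨆ w ∈ domConj f, ((w v : ℝ) : EReal)) ≤ ((u₀ : ℝ) : EReal) := by
      refine iSup₂_le fun w hw => ?_
      have := hlt w (subset_closure hw)
      rw [hv w] at this
      exact_mod_cast this.le
    have hrec : recAt f x₀ v ≤ ((u₀ : ℝ) : EReal) :=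
      (recAt_le_biSup f hepi hlsc hbot x₀ r₀ hr₀ v).trans hS
    have hzv : ((z v : ℝ) : EReal) ≤ ((u₀ : ℝ) : EReal) := (hz v).trans hrec
    rw [hv z] at hgt
    exact absurd (EReal.coe_le_coe_iff.mp hzv) (not_le.mpr hgt)
  · exact closure_minimal (domConj_subset_subdiff0 f hbot x₀ r₀ hr₀) (isClosed_subdiff0 _)

lemma domConj_convex_s13 (f : E → EReal) (hbot : ∀ x, f x ≠ ⊥) :
    Convex ℝ (domConj f) := by
  intro z₁ h₁ z₂ h₂ a b ha hb hab
  have hc₁ : conjFn f z₁ ≤ (((conjFn f z₁).toReal : ℝ) : EReal) := EReal.le_coe_toReal h₁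
  have hc₂ : conjFn f z₂ ≤ (((conjFn f z₂).toReal : ℝ) : EReal) := EReal.le_coe_toReal h₂
  set c₁ : ℝ := (conjFn f z₁).toReal
  set c₂ : ℝ := (conjFn f z₂).toReal
  show conjFn f (a • z₁ + b • z₂) ≠ ⊤
  have hble : conjFn f (a • z₁ + b • z₂) ≤ ((a * c₁ + b * c₂ : ℝ) : EReal) := by
    refine conjFn_le_of_forall hbot fun x r hr => ?_
    have hv : (a • z₁ + b • z₂) x = a * z₁ x + b * z₂ x := by
      rw [wd_add_apply, wd_smul_apply, wd_smul_apply]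
    have hb₁ : z₁ x - r ≤ c₁ := by
      have := le_iSup (fun x => ((z₁ x : ℝ) : EReal) - f x) x
      rw [hr, ← EReal.coe_sub] at this
      exact_mod_cast this.trans hc₁
    have hb₂ : z₂ x - r ≤ c₂ := by
      have := le_iSup (fun x => ((z₂ x : ℝ) : EReal) - f x) x
      rw [hr, ← EReal.coe_sub] at this
      exact_mod_cast this.trans hc₂
    rw [hv]
    have q1 := mul_le_mul_of_nonneg_left hb₁ ha
    have q2 := mul_le_mul_of_nonneg_left hb₂ hb
    have e₁ : a * (z₁ x - r) = a * z₁ x - a * r := by ring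
    have e₂ : b * (z₂ x - r) = b * z₂ x - b * r := by ring
    rw [e₁] at q1
    rw [e₂] at q2
    have e₃ : a * r + b * r = r := by rw [← add_mul, hab, one_mul]
    linarith
  intro htop
  rw [htop] at hble
  exact EReal.coe_ne_top _ (top_le_iff.mp hble)

end ConvexAnalysis
section MoreAux

lemma ereal_add_coe_ne_bot {X : EReal} (hX : X ≠ ⊥) (c : ℝ) : X + (c : EReal) ≠ ⊥ := by
  induction X using EReal.rec with
  | bot => exact absurd rfl hX
  | coe r => rw [← EReal.coe_add]; exact EReal.coe_ne_bot _
  | top => rw [EReal.top_add_coe]; exact top_ne_bot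

lemma ereal_add_coe_le_coe_iff (X : EReal) (c r : ℝ) :
    X + (c : EReal) ≤ (r : EReal) ↔ X ≤ ((r - c : ℝ) : EReal) := by
  induction X using EReal.rec with
  | bot => rw [EReal.bot_add]; simp
  | coe a =>
      rw [← EReal.coe_add, EReal.coe_le_coe_iff, EReal.coe_le_coe_iff]
      constructor <;> intro <;> linarith
  | top =>
      rw [EReal.top_add_coe]
      constructor <;> intro h2 <;>
        exact absurd (top_le_iff.mp h2) (EReal.coe_ne_top _)

lemma ereal_add_coe_le_self_iff {R : EReal} (c : ℝ) : R + (c : EReal) ≤ (c : EReal) ↔ R ≤ 0 := by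
  have := ereal_add_coe_le_add_coe_iff (a := R) (b := 0) c
  rwa [zero_add] at this

lemma ereal_coe_le_add_self_iff {R : EReal} (c : ℝ) : (c : EReal) ≤ R + c ↔ 0 ≤ R := by
  have := ereal_add_coe_le_add_coe_iff (a := (0 : EReal)) (b := R) c
  rwa [zero_add] at this

lemma ereal_coe_sub_add_coe (w : EReal) (hw : w ≠ ⊥) (c : ℝ) :
    (c : EReal) - (w + (c : EReal)) = -w := by
  induction w using EReal.rec with
  | bot => exact absurd rfl hw
  | coe r =>
      rw [← EReal.coe_add, ← EReal.coe_sub, ← EReal.coe_neg]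
      norm_cast
      ring
  | top => rw [EReal.top_add_coe, EReal.sub_top, EReal.neg_top]

lemma coneGen_convex {F : Type*} [AddCommGroup F] [Module ℝ F] [TopologicalSpace F]
    {A : Set F} (hA : Convex ℝ A) (a : F) : Convex ℝ (coneGen A a) := by
  rintro p ⟨t₁, ht₁, b₁, hb₁, rfl⟩ q ⟨t₂, ht₂, b₂, hb₂, rfl⟩ θ₁ θ₂ hθ₁ hθ₂ hθ
  rcases eq_or_lt_of_le (by positivity : (0:ℝ) ≤ θ₁ * t₁ + θ₂ * t₂) with hτ | hτ
  · have h1 : θ₁ * t₁ = 0 := by nlinarith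
    have h2 : θ₂ * t₂ = 0 := by nlinarith
    refine ⟨0, le_refl 0, b₁, hb₁, ?_⟩
    rw [zero_smul, smul_smul, smul_smul, h1, h2, zero_smul, zero_smul, add_zero]
  · set τ : ℝ := θ₁ * t₁ + θ₂ * t₂ with hτdef
    have hτ0 : τ ≠ 0 := ne_of_gt hτ
    refine ⟨τ, hτ.le, (θ₁ * t₁ / τ) • b₁ + (θ₂ * t₂ / τ) • b₂,
      hA hb₁ hb₂ (by positivity) (by positivity) (by rw [← add_div, div_self hτ0]), ?_⟩
    have hc₁ : τ * (θ₁ * t₁ / τ) = θ₁ * t₁ := by field_simp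
    have hc₂ : τ * (θ₂ * t₂ / τ) = θ₂ * t₂ := by field_simp
    match_scalars
    · simp [hc₁]
    · rw [hτdef]; ring
    · simp [hc₂]

end MoreAux
variable {X : Type*} {Y : Type*}

theorem stmt13 [AddCommGroup X] [Module ℝ X] [TopologicalSpace X] [IsTopologicalAddGroup X]
    [ContinuousSMul ℝ X] [LocallyConvexSpace ℝ X] [T2Space X]
    [AddCommGroup Y] [Module ℝ Y] [TopologicalSpace Y] [IsTopologicalAddGroup Y]
    [ContinuousSMul ℝ Y] [LocallyConvexSpace ℝ Y] [T2Space Y]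
    (h : Y → EReal) (hh : GammaFn h) (A : X →L[ℝ] Y) (xs : WeakDual ℝ X)
    (f : X → EReal) (hfdef : ∀ x : X, f x = h (A x) + ((xs x : ℝ) : EReal))
    (x₀ : X) (hx₀ : f x₀ ≠ ⊤) :
    -- (a)
    ((∀ u : X, recAt f x₀ u = recAt h (A x₀) (A u) + ((xs u : ℝ) : EReal)) ∧
      ∀ u : X, A u = 0 → recAt f x₀ u = ((xs u : ℝ) : EReal)) ∧
    -- (b)
    (((∀ y : Y, 0 ≤ recAt h (A x₀) y) →
        xs ∈ subdiff0 (recAt f x₀) ∧ subdiff0 (recAt f x₀) = closure (domConj f)) ∧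
      ((xs ∈ closure (domConj f) ∧ Function.Surjective A) →
        ∀ y : Y, 0 ≤ recAt h (A x₀) y)) ∧
    -- (c)
    (({y : Y | recAt h (A x₀) y ≤ 0} = {0} →
        {u : X | A u = 0} = {u : X | recAt f x₀ u ≤ ((xs u : ℝ) : EReal)} ∧
          xs ∈ qri (closure (domConj f))) ∧
      ((Function.Surjective A ∧
          {u : X | A u = 0} = {u : X | recAt f x₀ u ≤ ((xs u : ℝ) : EReal)}) →
        {y : Y | recAt h (A x₀) y ≤ 0} = {0})) ∧
    -- (d)
    (((∃ m : ℝ, ∀ y : Y, (m : EReal) ≤ h y) →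
        (∀ y : Y, 0 ≤ recAt h (A x₀) y) ∧ conjFn f xs ≠ ⊤) ∧
      (Function.Surjective A →
        (⨅ y : Y, h y) = -(conjFn f xs) ∧
          ((∃ m : ℝ, ∀ y : Y, (m : EReal) ≤ h y) ↔ conjFn f xs ≠ ⊤))) ∧
    -- (e)
    (Function.Surjective A →
      ((∃ y₀ : Y, ∀ y : Y, h y₀ ≤ h y) ↔ ∃ x : X, inSubdiff f xs x)) := by
  classical
  have hbotY : ∀ y, h y ≠ ⊥ := hh.2.1
  have hfbot : ∀ x, f x ≠ ⊥ := fun x => by rw [hfdef x]; exact ereal_add_coe_ne_bot (hbotY _) _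
  have hAx₀ : h (A x₀) ≠ ⊤ := by
    intro ht; apply hx₀; rw [hfdef x₀, ht, EReal.top_add_coe]
  set ρ : ℝ := (h (A x₀)).toReal with hρdef
  have hρ : h (A x₀) = (ρ : EReal) := (EReal.coe_toReal hAx₀ (hbotY _)).symm
  set r₀ : ℝ := ρ + xs x₀ with hr₀def
  have hf0 : f x₀ = (r₀ : EReal) := by rw [hfdef x₀, hρ, hr₀def, EReal.coe_add]
  have parta1 : ∀ u : X, recAt f x₀ u = recAt h (A x₀) (A u) + ((xs u : ℝ) : EReal) :=
    recAt_comp h hbotY A xs f hfdef x₀ ρ hρ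
  have hrec0 : recAt h (A x₀) 0 = 0 := recAt_self_zero h (A x₀) ρ hρ
  have parta2 : ∀ u : X, A u = 0 → recAt f x₀ u = ((xs u : ℝ) : EReal) := fun u hu => by
    rw [parta1 u, hu, hrec0, zero_add]
  -- lower semicontinuity of f
  have hflsc : LowerSemicontinuous f := by
    have h1 : LowerSemicontinuous fun x : X => h (A x) :=
      LowerSemicontinuous.comp hh.2.2.2 A.continuous
    have h2 : LowerSemicontinuous fun x : X => ((xs x : ℝ) : EReal) :=
      (continuous_coe_real_ereal.comp (map_continuous xs)).lowerSemicontinuous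
    have h3 : LowerSemicontinuous fun x : X => h (A x) + ((xs x : ℝ) : EReal) :=
      h1.add' h2 fun x => EReal.continuousAt_add (Or.inr (EReal.coe_ne_bot _))
        (Or.inr (EReal.coe_ne_top _))
    have hfeq : f = fun x : X => h (A x) + ((xs x : ℝ) : EReal) := funext hfdef
    rw [hfeq]; exact h3
  -- convexity of epigraph of f
  have hfepi : Convex ℝ {p : X × ℝ | f p.1 ≤ (p.2 : EReal)} := by
    rintro ⟨p1, p2⟩ hp ⟨q1, q2⟩ hq a b ha hb hab
    simp only [Set.mem_setOf_eq] at hp hq ⊢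
    rw [hfdef] at hp hq
    have hp' : (A p1, p2 - xs p1) ∈ {w : Y × ℝ | h w.1 ≤ (w.2 : EReal)} :=
      (ereal_add_coe_le_coe_iff _ _ _).mp hp
    have hq' : (A q1, q2 - xs q1) ∈ {w : Y × ℝ | h w.1 ≤ (w.2 : EReal)} :=
      (ereal_add_coe_le_coe_iff _ _ _).mp hq
    have hcomb := hh.2.2.1 hp' hq' ha hb hab
    simp only [Prod.smul_mk, Prod.mk_add_mk, Set.mem_setOf_eq, smul_eq_mul] at hcomb
    simp only [Prod.smul_mk, Prod.mk_add_mk, smul_eq_mul]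
    rw [hfdef, ereal_add_coe_le_coe_iff]
    have hA : A (a • p1 + b • q1) = a • A p1 + b • A q1 := by
      rw [map_add, map_smul, map_smul]
    have hxs : xs (a • p1 + b • q1) = a * xs p1 + b * xs q1 := by
      rw [map_add, map_smul, map_smul, smul_eq_mul, smul_eq_mul]
    rw [hA, hxs]
    have harith : a * p2 + b * q2 - (a * xs p1 + b * xs q1)
        = a * (p2 - xs p1) + b * (q2 - xs q1) := by ring
    rw [harith]
    exact hcomb
  have hdomconv : Convex ℝ (domConj f) := domConj_convex_s13 f hfbot
  have hsubeq : subdiff0 (recAt f x₀) = closure (domConj f) :=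
    subdiff0_recAt_eq_closure_domConj f hfepi hflsc hfbot x₀ r₀ hf0 hdomconv
  -- conjugate identity
  have hkey : ∀ x : X, ((xs x : ℝ) : EReal) - f x = -(h (A x)) := fun x => by
    rw [hfdef x]; exact ereal_coe_sub_add_coe _ (hbotY _) _
  have hconj_eq : conjFn f xs = -(⨅ x : X, h (A x)) := by
    unfold conjFn
    have he : (⨆ x : X, (((xs x : ℝ) : EReal) - f x)) = ⨆ x : X, -(h (A x)) := iSup_congr hkey
    rw [he, ereal_iSup_neg]
  have hxs_sub_of_pos : (∀ y : Y, 0 ≤ recAt h (A x₀) y) → xs ∈ subdiff0 (recAt f x₀) := by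
    intro hpos x
    rw [parta1 x]
    exact (ereal_coe_le_add_self_iff (xs x)).mpr (hpos (A x))
  have hker_iff : ∀ u : X,
      (recAt f x₀ u ≤ ((xs u : ℝ) : EReal) ↔ recAt h (A x₀) (A u) ≤ 0) := fun u => by
    rw [parta1 u]; exact ereal_add_coe_le_self_iff (xs u)
  have hpos_of_bound : ∀ m : ℝ, (∀ y : Y, (m : EReal) ≤ h y) →
      ∀ y : Y, 0 ≤ recAt h (A x₀) y := by
    intro m hm y
    by_contra hneg
    push_neg at hneg
    obtain ⟨c, hc1, hc2⟩ := EReal.lt_iff_exists_real_btwn.mp hneg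
    have hc0 : c < 0 := by exact_mod_cast hc2
    set t : ℝ := max 1 ((m - ρ)/c + 1) with htdef
    have ht1 : (1:ℝ) ≤ t := le_max_left _ _
    have ht0 : (0:ℝ) < t := lt_of_lt_of_le one_pos ht1
    have h3 : (m - ρ)/c + 1 ≤ t := le_max_right _ _
    have hdc : (m - ρ)/c * c = m - ρ := div_mul_cancel₀ _ (ne_of_lt hc0)
    have htc : t * c < m - ρ := by
      nlinarith [mul_nonneg (by linarith : (0:ℝ) ≤ t - ((m - ρ)/c + 1))
        (by linarith : (0:ℝ) ≤ -c), hdc]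
    have k : t⁻¹ * t = 1 := inv_mul_cancel₀ (ne_of_gt ht0)
    have hclt : c < t⁻¹ * (m - ρ) := by
      have h5 := mul_lt_mul_of_pos_left htc (inv_pos.mpr ht0)
      rwa [← mul_assoc, k, one_mul] at h5
    have hq : ((t⁻¹ : ℝ) : EReal) * (h (A x₀ + t • y) - h (A x₀)) ≤ recAt h (A x₀) y :=
      le_iSup₂ (f := fun (t : ℝ) (_ : t ∈ Set.Ioi (0:ℝ)) =>
        ((t⁻¹ : ℝ) : EReal) * (h (A x₀ + t • y) - h (A x₀))) t (Set.mem_Ioi.mpr ht0)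
    have hlow : ((t⁻¹ * (m - ρ) : ℝ) : EReal)
        ≤ ((t⁻¹ : ℝ) : EReal) * (h (A x₀ + t • y) - h (A x₀)) := by
      rw [EReal.coe_mul, hρ]
      refine mul_le_mul_of_nonneg_left ?_ (by exact_mod_cast (inv_pos.mpr ht0).le)
      rw [EReal.coe_sub]
      exact EReal.sub_le_sub (hm _) le_rfl
    have hfin : ((c : ℝ) : EReal) < recAt h (A x₀) y :=
      lt_of_lt_of_le (lt_of_lt_of_le (by exact_mod_cast hclt) hlow) hq
    exact absurd (hfin.trans hc1) (lt_irrefl _)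
  refine ⟨⟨parta1, parta2⟩, ⟨?_, ?_⟩, ⟨?_, ?_⟩, ⟨?_, ?_⟩, ?_⟩
  · -- b1
    intro hpos
    exact ⟨hxs_sub_of_pos hpos, hsubeq⟩
  · -- b2
    rintro ⟨hmem, hsurj⟩ y
    obtain ⟨u, rfl⟩ := hsurj y
    have hx : xs ∈ subdiff0 (recAt f x₀) := by rw [hsubeq]; exact hmem
    have h5 := hx u
    rw [parta1 u] at h5
    exact (ereal_coe_le_add_self_iff (xs u)).mp h5
  · -- c1
    intro hset
    have hmem0 : ∀ y : Y, recAt h (A x₀) y ≤ 0 ↔ y = 0 := by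
      intro y
      rw [← Set.mem_singleton_iff, ← hset]
      exact Iff.rfl
    have hpos : ∀ y, 0 ≤ recAt h (A x₀) y := by
      intro y
      rcases le_or_gt (recAt h (A x₀) y) 0 with hle | hlt
      · rw [(hmem0 y).mp hle, hrec0]
      · exact hlt.le
    constructor
    · ext u
      simp only [Set.mem_setOf_eq]
      rw [hker_iff u]
      constructor
      · intro hu; rw [hu, hrec0]
      · intro hu; exact (hmem0 (A u)).mp hu
    · -- qri
      have hxs_cl : xs ∈ closure (domConj f) := by
        rw [← hsubeq]; exact hxs_sub_of_pos hpos
      refine ⟨hxs_cl, ?_⟩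
      refine ⟨{ carrier := {z : WeakDual ℝ X | ∀ u : X, A u = 0 → z u = 0}
                add_mem' := fun hz hw u hu => by
                  rw [wd_add_apply, hz u hu, hw u hu, add_zero]
                zero_mem' := fun u hu => rfl
                smul_mem' := fun c z hz u hu => by
                  rw [wd_smul_apply, hz u hu, mul_zero] }, ?_⟩
      apply Set.Subset.antisymm
      · -- closure coneGen ⊆ S
        have hSclosed : IsClosed {z : WeakDual ℝ X | ∀ u : X, A u = 0 → z u = 0} := by
          have hrw : {z : WeakDual ℝ X | ∀ u : X, A u = 0 → z u = 0}
              = ⋂ u ∈ {u : X | A u = 0}, {z : WeakDual ℝ X | z u = (0:ℝ)} := by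
            ext z
            simp only [Set.mem_setOf_eq, Set.mem_iInter]
          rw [hrw]
          exact isClosed_biInter fun u hu =>
            isClosed_eq (WeakBilin.eval_continuous (topDualPairing ℝ X) u) continuous_const
        refine closure_minimal ?_ hSclosed
        rintro w ⟨t, ht, b, hb, rfl⟩ u hu
        have hb' : b ∈ subdiff0 (recAt f x₀) := by rw [hsubeq]; exact hb
        have h1 : b u = xs u := by
          have e1 : ((b u : ℝ) : EReal) ≤ ((xs u : ℝ) : EReal) := by
            have := hb' u; rwa [parta2 u hu] at this
          have e2 : ((b (-u) : ℝ) : EReal) ≤ ((xs (-u) : ℝ) : EReal) := by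
            have := hb' (-u)
            rwa [parta2 (-u) (by rw [map_neg, hu, neg_zero])] at this
          have e1' : b u ≤ xs u := EReal.coe_le_coe_iff.mp e1
          have e2' : b (-u) ≤ xs (-u) := EReal.coe_le_coe_iff.mp e2
          rw [map_neg, map_neg] at e2'
          linarith
        show (t • (b - xs)) u = 0
        rw [wd_smul_apply, wd_sub_apply, h1, sub_self, mul_zero]
      · -- S ⊆ closure coneGen
        intro z hz
        by_contra hcl
        have hCconv : Convex ℝ (coneGen (closure (domConj f)) xs) :=
          coneGen_convex hdomconv.closure xs
        obtain ⟨φ, u₀, hltC, hgtC⟩ := geometric_hahn_banach_closed_point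
          (E := WeakDual ℝ X) (x := z) hCconv.closure isClosed_closure hcl
        obtain ⟨v, hv⟩ := weakdual_dual_eval φ
        obtain ⟨z₀, c₀, hz₀b⟩ := exists_conj_bound f hfepi hflsc hfbot x₀
          (by rw [hf0]; exact EReal.coe_ne_top _)
        have hz₀mem : z₀ ∈ domConj f := by
          show conjFn f z₀ ≠ ⊤
          intro htop; rw [htop] at hz₀b
          exact absurd (top_le_iff.mp hz₀b) (EReal.coe_ne_top _)
        have h0C : (0 : WeakDual ℝ X) ∈ coneGen (closure (domConj f)) xs :=
          ⟨0, le_refl 0, z₀, subset_closure hz₀mem, (zero_smul ℝ _).symm⟩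
        have hu₀ : 0 < u₀ := by
          have := hltC 0 (subset_closure h0C)
          rwa [map_zero] at this
        have hble : ∀ b ∈ closure (domConj f), b v ≤ xs v := by
          intro b hb
          by_contra hbv
          push_neg at hbv
          have hε0 : (0:ℝ) < b v - xs v := by linarith
          have hmemC : ((u₀ + 1)/(b v - xs v)) • (b - xs) ∈ coneGen (closure (domConj f)) xs :=
            ⟨(u₀+1)/(b v - xs v), div_nonneg (by linarith) hε0.le, b, hb, rfl⟩
          have hlt2 := hltC _ (subset_closure hmemC)
          rw [hv] at hlt2
          rw [wd_smul_apply, wd_sub_apply, div_mul_cancel₀ _ (ne_of_gt hε0)] at hlt2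
          linarith
        have hsup : (⨆ b ∈ domConj f, ((b v : ℝ) : EReal)) ≤ ((xs v : ℝ) : EReal) :=
          iSup₂_le fun b hb => EReal.coe_le_coe_iff.mpr (hble b (subset_closure hb))
        have hrec := (recAt_le_biSup f hfepi hflsc hfbot x₀ r₀ hf0 v).trans hsup
        rw [parta1 v] at hrec
        have hneg : recAt h (A x₀) (A v) ≤ 0 := (ereal_add_coe_le_self_iff (xs v)).mp hrec
        have hAv : A v = 0 := (hmem0 (A v)).mp hneg
        have hzv : z v = 0 := hz v hAv
        rw [hv, hzv] at hgtC
        linarith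
  · -- c2
    rintro ⟨hsurj, hker⟩
    ext y
    simp only [Set.mem_setOf_eq, Set.mem_singleton_iff]
    constructor
    · intro hy
      obtain ⟨u, rfl⟩ := hsurj y
      have hu : u ∈ {u : X | recAt f x₀ u ≤ ((xs u : ℝ) : EReal)} := (hker_iff u).mpr hy
      rw [← hker] at hu
      exact hu
    · intro hy; rw [hy, hrec0]
  · -- d1
    rintro ⟨m, hm⟩
    refine ⟨hpos_of_bound m hm, ?_⟩
    have hinf : (m : EReal) ≤ ⨅ x : X, h (A x) := le_iInf fun x => hm (A x)
    have hb2 : conjFn f xs ≤ ((-m : ℝ) : EReal) := by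
      rw [hconj_eq, EReal.coe_neg]
      exact EReal.neg_le_neg_iff.mpr hinf
    intro ht; rw [ht] at hb2
    exact absurd (top_le_iff.mp hb2) (EReal.coe_ne_top _)
  · -- d2
    intro hsurj
    have hic : (⨅ x : X, h (A x)) = ⨅ y : Y, h y := hsurj.iInf_comp h
    have hconj2 : conjFn f xs = -(⨅ y : Y, h y) := by rw [hconj_eq, hic]
    refine ⟨by rw [hconj2, neg_neg], ?_, ?_⟩
    · rintro ⟨m, hm⟩
      have hinf : (m : EReal) ≤ ⨅ x : X, h (A x) := le_iInf fun x => hm (A x)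
      have hb2 : conjFn f xs ≤ ((-m : ℝ) : EReal) := by
        rw [hconj_eq, EReal.coe_neg]
        exact EReal.neg_le_neg_iff.mpr hinf
      intro ht; rw [ht] at hb2
      exact absurd (top_le_iff.mp hb2) (EReal.coe_ne_top _)
    · intro hne
      have hIbot : (⨅ y : Y, h y) ≠ ⊥ := by
        intro hb; rw [hconj2, hb, EReal.neg_bot] at hne; exact hne rfl
      refine ⟨(⨅ y : Y, h y).toReal, fun y => ?_⟩
      exact le_trans (EReal.coe_toReal_le hIbot) (iInf_le _ y)
  · -- e
    intro hsurj
    constructor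
    · rintro ⟨y₀, hy₀⟩
      obtain ⟨yp, hyp⟩ := hh.1
      have hy₀top : h y₀ ≠ ⊤ := by
        intro ht
        exact hyp (top_le_iff.mp (ht ▸ hy₀ yp))
      have hσeq : h y₀ = ((h y₀).toReal : EReal) := (EReal.coe_toReal hy₀top (hbotY _)).symm
      set σ : ℝ := (h y₀).toReal with hσ
      obtain ⟨u, hu⟩ := hsurj y₀
      have hfu : f u = ((σ + xs u : ℝ) : EReal) := by rw [hfdef u, hu, hσeq, EReal.coe_add]
      refine ⟨u, by rw [hfu]; exact EReal.coe_ne_top _, by rw [hfu]; exact EReal.coe_ne_bot _, ?_⟩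
      intro x'
      rw [hfu, hfdef x', ← EReal.coe_add]
      have harith : (xs x' - xs u + (σ + xs u) : ℝ) = σ + xs x' := by ring
      rw [harith, EReal.coe_add]
      refine add_le_add_left ?_ _
      rw [← hσeq]
      exact hy₀ (A x')
    · rintro ⟨x, hx1, hx2, hx3⟩
      have hAx : h (A x) ≠ ⊤ := fun ht => hx1 (by rw [hfdef x, ht, EReal.top_add_coe])
      have hσeq : h (A x) = ((h (A x)).toReal : EReal) := (EReal.coe_toReal hAx (hbotY _)).symm
      set σ : ℝ := (h (A x)).toReal with hσ
      refine ⟨A x, fun y => ?_⟩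
      obtain ⟨x', rfl⟩ := hsurj y
      have h3 := hx3 x'
      rw [hfdef x', hfdef x, hσeq, ← EReal.coe_add, ← EReal.coe_add] at h3
      have harith : (xs x' - xs x + (σ + xs x) : ℝ) = σ + xs x' := by ring
      rw [harith, EReal.coe_add] at h3
      have h4 : (σ : EReal) ≤ h (A x') := (ereal_add_coe_le_add_coe_iff (xs x')).mp h3
      rw [hσeq]
      exact h4
end
end

section
/- Let X be a real separated locally convex space, f ∈ Γ(X), x* ∈ X*, and L := L_{x*} := {u ∈ X : f_∞(u) = ⟨u, x*⟩ and f_∞(−u) = −⟨u, x*⟩}. Then L is a closed linear subspace of X, dom f + L = dom f, (X \ dom f) + L = X \ dom f, and f(x + u) = f(x) + ⟨u, x*⟩ for all x ∈ X and all u ∈ L. -/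
open Filter Topology Set Pointwise TopologicalSpace

noncomputable section

section Aux


variable {X : Type*} [AddCommGroup X] [Module ℝ X] [TopologicalSpace X]

/-- The key one-sided property. -/
def QP (f : X → EReal) (xs : WeakDual ℝ X) (u : X) : Prop :=
  ∀ x, f x ≠ ⊤ → ∀ t : ℝ, 0 < t → f (x + t • u) ≤ f x + ((t * xs u : ℝ) : EReal)

variable {f : X → EReal} {xs : WeakDual ℝ X} {x₀ : X} {b : ℝ}

lemma conv2 (hconv : Convex ℝ {p : X × ℝ | f p.1 ≤ (p.2 : EReal)})
    {x y : X} {a c θ : ℝ} (hx : f x ≤ (a : EReal)) (hy : f y ≤ (c : EReal))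
    (h0 : 0 ≤ θ) (h1 : θ ≤ 1) :
    f (θ • x + (1 - θ) • y) ≤ ((θ * a + (1 - θ) * c : ℝ) : EReal) := by
  have hmem : (x, a) ∈ {p : X × ℝ | f p.1 ≤ (p.2 : EReal)} := hx
  have hmem' : (y, c) ∈ {p : X × ℝ | f p.1 ≤ (p.2 : EReal)} := hy
  have := hconv (b := 1 - θ) hmem hmem' h0 (by linarith) (by ring)
  simpa only [Set.mem_setOf_eq, Prod.smul_mk, Prod.mk_add_mk, smul_eq_mul] using this

lemma term_le_iff (hbot : ∀ x, f x ≠ ⊥) (hb : f x₀ = (b : EReal))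
    {u : X} {t r : ℝ} (ht : 0 < t) :
    ((t⁻¹ : ℝ) : EReal) * (f (x₀ + t • u) - f x₀) ≤ (r : EReal) ↔
      f (x₀ + t • u) ≤ ((b + t * r : ℝ) : EReal) := by
  constructor
  · intro h
    by_cases htop : f (x₀ + t • u) = ⊤
    · rw [htop, hb, EReal.top_sub_coe, EReal.coe_mul_top_of_pos (by positivity)] at h
      exact absurd h (EReal.coe_lt_top r).not_ge
    · have hd : f (x₀ + t • u) = ((f (x₀ + t • u)).toReal : EReal) :=
        (EReal.coe_toReal htop (hbot _)).symm
      set d := (f (x₀ + t • u)).toReal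
      rw [hd, hb, ← EReal.coe_sub, ← EReal.coe_mul, EReal.coe_le_coe_iff] at h
      rw [hd, EReal.coe_le_coe_iff]
      rw [inv_mul_eq_div, div_le_iff₀ ht] at h
      nlinarith
  · intro h
    have htop : f (x₀ + t • u) ≠ ⊤ := by
      intro hT; rw [hT] at h; exact (EReal.coe_lt_top _).not_ge h
    have hd : f (x₀ + t • u) = ((f (x₀ + t • u)).toReal : EReal) :=
      (EReal.coe_toReal htop (hbot _)).symm
    set d := (f (x₀ + t • u)).toReal
    rw [hd, EReal.coe_le_coe_iff] at h
    rw [hd, hb, ← EReal.coe_sub, ← EReal.coe_mul, EReal.coe_le_coe_iff,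
      inv_mul_eq_div, div_le_iff₀ ht]
    nlinarith

end Aux

section Top

variable {X : Type*} [AddCommGroup X] [Module ℝ X] [TopologicalSpace X]
  [IsTopologicalAddGroup X] [ContinuousSMul ℝ X]
variable {f : X → EReal} {xs : WeakDual ℝ X} {x₀ : X} {b : ℝ}

lemma qp_of_recAt_le (hbot : ∀ x, f x ≠ ⊥)
    (hconv : Convex ℝ {p : X × ℝ | f p.1 ≤ (p.2 : EReal)})
    (hlsc : LowerSemicontinuous f) (hb : f x₀ = (b : EReal))
    {u : X} (hA : recAt f x₀ u ≤ ((xs u : ℝ) : EReal)) : QP f xs u := by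
  have hub : ∀ s : ℝ, 0 < s → f (x₀ + s • u) ≤ ((b + s * xs u : ℝ) : EReal) := by
    intro s hs
    rw [recAt] at hA
    have h1 : ((s⁻¹ : ℝ) : EReal) * (f (x₀ + s • u) - f x₀) ≤ ((xs u : ℝ) : EReal) :=
      le_trans (le_biSup (fun r : ℝ => ((r⁻¹ : ℝ) : EReal) * (f (x₀ + r • u) - f x₀))
        (Set.mem_Ioi.2 hs)) hA
    exact (term_le_iff hbot hb hs).1 h1
  intro x hx t ht
  have hxa : f x = ((f x).toReal : EReal) := (EReal.coe_toReal hx (hbot x)).symm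
  set a : ℝ := (f x).toReal with ha
  rw [hxa, ← EReal.coe_add]
  by_contra hgt
  have hlt : ((a + t * xs u : ℝ) : EReal) < f (x + t • u) := not_le.1 hgt
  obtain ⟨c, hc1, hc2⟩ := EReal.exists_between_coe_real hlt
  have h0 : Tendsto (fun s : ℝ => t / s) atTop (𝓝 0) :=
    Tendsto.div_atTop tendsto_const_nhds tendsto_id
  have hy_tendsto : Tendsto (fun s : ℝ => x + (t / s) • (x₀ - x) + t • u) atTop
      (𝓝 (x + t • u)) := by
    have := ((h0.smul_const (x₀ - x)).const_add x).add_const (t • u)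
    simpa using this
  have hev1 : ∀ᶠ s : ℝ in atTop, (c : EReal) < f (x + (t / s) • (x₀ - x) + t • u) :=
    hy_tendsto.eventually (hlsc (x + t • u) _ hc2)
  have hev2 : ∀ᶠ s : ℝ in atTop, (1 - t / s) * a + ((t / s) * b + t * xs u) < c := by
    have htd : Tendsto (fun s : ℝ => (1 - t / s) * a + ((t / s) * b + t * xs u)) atTop
        (𝓝 ((1 - 0) * a + (0 * b + t * xs u))) :=
      ((h0.const_sub 1).mul_const a).add ((h0.mul_const b).add_const (t * xs u))
    have hc1' : a + t * xs u < c := by exact_mod_cast hc1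
    exact htd.eventually_lt_const (by simpa using hc1')
  obtain ⟨s, hs1, hs2, hs3⟩ := (hev1.and (hev2.and (eventually_gt_atTop t))).exists
  have hs0 : 0 < s := lt_trans ht hs3
  have hθ0 : 0 < t / s := div_pos ht hs0
  have hθ1 : t / s < 1 := (div_lt_one hs0).2 hs3
  have hcomb : (t / s) • (x₀ + s • u) + (1 - t / s) • x = x + (t / s) • (x₀ - x) + t • u := by
    rw [smul_add, smul_smul, div_mul_cancel₀ t hs0.ne', smul_sub, sub_smul, one_smul]
    abel
  have hbd := conv2 hconv (hub s hs0) hxa.le hθ0.le hθ1.le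
  rw [hcomb] at hbd
  have hre : (t / s) * (b + s * xs u) + (1 - t / s) * a
      = (1 - t / s) * a + ((t / s) * b + t * xs u) := by
    field_simp
    ring
  rw [hre] at hbd
  exact absurd (lt_trans hs1 (lt_of_le_of_lt hbd (EReal.coe_lt_coe_iff.2 hs2))) (lt_irrefl _)

lemma recAt_eq_of_qp (hbot : ∀ x, f x ≠ ⊥) (hb : f x₀ = (b : EReal))
    {u : X} (hQ : QP f xs u) (hQn : QP f xs (-u)) :
    recAt f x₀ u = ((xs u : ℝ) : EReal) := by
  have hx₀top : f x₀ ≠ ⊤ := by rw [hb]; exact EReal.coe_ne_top b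
  apply le_antisymm
  · apply iSup₂_le
    intro t ht
    rw [Set.mem_Ioi] at ht
    have h1 := hQ x₀ hx₀top t ht
    rw [hb, ← EReal.coe_add] at h1
    exact (term_le_iff hbot hb ht).2 h1
  · have h1 := hQ x₀ hx₀top 1 one_pos
    rw [one_smul, hb, ← EReal.coe_add] at h1
    have htop : f (x₀ + u) ≠ ⊤ := fun hT => by
      rw [hT] at h1; exact (EReal.coe_lt_top _).not_ge h1
    have hd : f (x₀ + u) = ((f (x₀ + u)).toReal : EReal) :=
      (EReal.coe_toReal htop (hbot _)).symm
    set d : ℝ := (f (x₀ + u)).toReal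
    have h2 := hQn (x₀ + u) htop 1 one_pos
    rw [one_smul, add_neg_cancel_right, hb, hd, ← EReal.coe_add, EReal.coe_le_coe_iff] at h2
    have hxsneg : xs (-u) = - xs u := map_neg xs u
    have hxd : xs u ≤ d - b := by rw [hxsneg] at h2; linarith
    have hterm : ((xs u : ℝ) : EReal) ≤ (((1 : ℝ)⁻¹ : ℝ) : EReal) * (f (x₀ + (1 : ℝ) • u) - f x₀) := by
      rw [one_smul, hd, hb, ← EReal.coe_sub, ← EReal.coe_mul, EReal.coe_le_coe_iff]
      simpa using hxd
    rw [recAt]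
    exact le_trans hterm (le_biSup (fun r : ℝ => ((r⁻¹ : ℝ) : EReal) * (f (x₀ + r • u) - f x₀))
      (Set.mem_Ioi.2 one_pos))

lemma isClosed_recAt_le (hbot : ∀ x, f x ≠ ⊥) (hlsc : LowerSemicontinuous f)
    (hb : f x₀ = (b : EReal)) :
    IsClosed {u : X | recAt f x₀ u ≤ ((xs u : ℝ) : EReal)} := by
  rw [← isOpen_compl_iff, isOpen_iff_mem_nhds]
  intro u₀ hu₀
  rw [Set.mem_compl_iff, Set.mem_setOf_eq, not_le, recAt] at hu₀
  simp only [lt_iSup_iff] at hu₀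
  obtain ⟨t, ht, hlt⟩ := hu₀
  rw [Set.mem_Ioi] at ht
  have hnle : ¬ f (x₀ + t • u₀) ≤ ((b + t * xs u₀ : ℝ) : EReal) := fun h =>
    hlt.not_ge ((term_le_iff hbot hb ht).2 h)
  obtain ⟨c, hc1, hc2⟩ := EReal.exists_between_coe_real (not_le.1 hnle)
  have hc1' : b + t * xs u₀ < c := by exact_mod_cast hc1
  have hV : IsOpen ({v : X | xs v < (c - b) / t} ∩ {v : X | (c : EReal) < f (x₀ + t • v)}) := by
    apply IsOpen.inter
    · exact isOpen_lt (map_continuous xs) continuous_const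
    · exact (hlsc.isOpen_preimage (c : EReal)).preimage
        (continuous_const.add (continuous_id.const_smul t))
  refine mem_nhds_iff.2 ⟨_, ?_, hV, ?_, hc2⟩
  · intro v hv
    obtain ⟨hv1, hv2⟩ := hv
    rw [Set.mem_compl_iff, Set.mem_setOf_eq, not_le]
    have hb2 : ((b + t * xs v : ℝ) : EReal) < f (x₀ + t • v) := by
      refine lt_trans ?_ hv2
      rw [EReal.coe_lt_coe_iff]
      rw [Set.mem_setOf_eq, lt_div_iff₀ ht] at hv1
      nlinarith
    have hterm : ¬ ((t⁻¹ : ℝ) : EReal) * (f (x₀ + t • v) - f x₀) ≤ ((xs v : ℝ) : EReal) :=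
      fun h => hb2.not_ge ((term_le_iff hbot hb ht).1 h)
    calc ((xs v : ℝ) : EReal) < ((t⁻¹ : ℝ) : EReal) * (f (x₀ + t • v) - f x₀) := not_le.1 hterm
      _ ≤ recAt f x₀ v := by
          rw [recAt]
          exact le_biSup (fun r : ℝ => ((r⁻¹ : ℝ) : EReal) * (f (x₀ + r • v) - f x₀))
            (Set.mem_Ioi.2 ht)
  · rw [Set.mem_setOf_eq, lt_div_iff₀ ht]
    nlinarith

end Top

section QAlg

variable {X : Type*} [AddCommGroup X] [Module ℝ X] [TopologicalSpace X]
variable {f : X → EReal} {xs : WeakDual ℝ X}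

lemma qp_zero : QP f xs 0 := by
  intro x hx t ht
  simp

lemma qp_add (hbot : ∀ x, f x ≠ ⊥) {u v : X} (hu : QP f xs u) (hv : QP f xs v) :
    QP f xs (u + v) := by
  intro x hx t ht
  have h1 := hu x hx t ht
  have hne : f (x + t • u) ≠ ⊤ := by
    intro hT; rw [hT] at h1
    exact (EReal.add_lt_top hx (EReal.coe_ne_top _)).ne (top_le_iff.1 h1)
  have h2 := hv (x + t • u) hne t ht
  calc f (x + t • (u + v)) = f ((x + t • u) + t • v) := by rw [smul_add, add_assoc]
    _ ≤ f (x + t • u) + ((t * xs v : ℝ) : EReal) := h2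
    _ ≤ (f x + ((t * xs u : ℝ) : EReal)) + ((t * xs v : ℝ) : EReal) := add_le_add h1 le_rfl
    _ = f x + ((t * xs (u + v) : ℝ) : EReal) := by
        rw [add_assoc, ← EReal.coe_add, map_add, mul_add]

lemma qp_smul_pos {u : X} {c : ℝ} (hc : 0 < c) (hu : QP f xs u) : QP f xs (c • u) := by
  intro x hx t ht
  have h1 := hu x hx (t * c) (mul_pos ht hc)
  have hxs : xs (c • u) = c * xs u := by rw [map_smul, smul_eq_mul]
  rw [smul_smul, hxs, show t * (c * xs u) = t * c * xs u from (mul_assoc t c (xs u)).symm]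
  exact h1

end QAlg


variable {X : Type*}

theorem stmt14 [AddCommGroup X] [Module ℝ X] [TopologicalSpace X] [IsTopologicalAddGroup X]
    [ContinuousSMul ℝ X] [LocallyConvexSpace ℝ X] [T2Space X]
    (f : X → EReal) (hf : GammaFn f) (x₀ : X) (hx₀ : f x₀ ≠ ⊤)
    (xs : WeakDual ℝ X) :
    IsClosed (LxSet (recAt f x₀) xs) ∧
    (∃ S : Submodule ℝ X, LxSet (recAt f x₀) xs = (S : Set X)) ∧
    {x : X | f x ≠ ⊤} + LxSet (recAt f x₀) xs = {x : X | f x ≠ ⊤} ∧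
    {x : X | f x = ⊤} + LxSet (recAt f x₀) xs = {x : X | f x = ⊤} ∧
    ∀ x : X, ∀ u ∈ LxSet (recAt f x₀) xs, f (x + u) = f x + ((xs u : ℝ) : EReal) := by
  obtain ⟨-, hbot, hconv, hlsc⟩ := hf
  set b : ℝ := (f x₀).toReal with hbdef
  have hb : f x₀ = (b : EReal) := (EReal.coe_toReal hx₀ (hbot x₀)).symm
  set L := LxSet (recAt f x₀) xs with hLdef
  have hQ_of_mem : ∀ u ∈ L, QP f xs u ∧ QP f xs (-u) := by
    rintro u ⟨h1, h2⟩
    refine ⟨qp_of_recAt_le hbot hconv hlsc hb h1.le, qp_of_recAt_le hbot hconv hlsc hb ?_⟩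
    rw [h2, map_neg]
  have hmem_of_Q : ∀ u, QP f xs u → QP f xs (-u) → u ∈ L := by
    intro u hQ hQn
    refine ⟨recAt_eq_of_qp hbot hb hQ hQn, ?_⟩
    have h := recAt_eq_of_qp hbot hb hQn (by rwa [neg_neg])
    rwa [map_neg] at h
  have h0L : (0 : X) ∈ L := hmem_of_Q 0 qp_zero (by rw [neg_zero]; exact qp_zero)
  have hP : ∀ x : X, ∀ u ∈ L, f (x + u) = f x + ((xs u : ℝ) : EReal) := by
    intro x u hu
    obtain ⟨hQ, hQn⟩ := hQ_of_mem u hu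
    by_cases hx : f x = ⊤
    · rw [hx, EReal.top_add_coe]
      by_contra hne
      have h2 := hQn (x + u) hne 1 one_pos
      rw [one_smul, add_neg_cancel_right, hx] at h2
      exact (EReal.add_lt_top hne (EReal.coe_ne_top _)).ne (top_le_iff.1 h2)
    · have h1 := hQ x hx 1 one_pos
      rw [one_smul, one_mul] at h1
      have hxa : f x = ((f x).toReal : EReal) := (EReal.coe_toReal hx (hbot x)).symm
      have hne : f (x + u) ≠ ⊤ := by
        intro hT; rw [hT] at h1
        exact (EReal.add_lt_top hx (EReal.coe_ne_top _)).ne (top_le_iff.1 h1)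
      have hd : f (x + u) = ((f (x + u)).toReal : EReal) := (EReal.coe_toReal hne (hbot _)).symm
      have h2 := hQn (x + u) hne 1 one_pos
      rw [one_smul, add_neg_cancel_right, one_mul, map_neg] at h2
      rw [hxa, hd, ← EReal.coe_add, EReal.coe_le_coe_iff] at h1
      rw [hxa, hd, ← EReal.coe_add, EReal.coe_le_coe_iff] at h2
      rw [hxa, hd, ← EReal.coe_add, EReal.coe_eq_coe_iff]
      linarith
  have hdom : {x : X | f x ≠ ⊤} + L = {x : X | f x ≠ ⊤} := by
    apply Set.Subset.antisymm
    · rintro z ⟨a, ha, u, hu, rfl⟩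
      rw [Set.mem_setOf_eq] at ha ⊢
      rw [hP a u hu]
      exact (EReal.add_lt_top ha (EReal.coe_ne_top _)).ne
    · intro z hz
      exact ⟨z, hz, 0, h0L, add_zero z⟩
  have htopset : {x : X | f x = ⊤} + L = {x : X | f x = ⊤} := by
    apply Set.Subset.antisymm
    · rintro z ⟨a, ha, u, hu, rfl⟩
      rw [Set.mem_setOf_eq] at ha ⊢
      rw [hP a u hu, ha, EReal.top_add_coe]
    · intro z hz
      exact ⟨z, hz, 0, h0L, add_zero z⟩
  have hclosed : IsClosed L := by
    have hA := isClosed_recAt_le (xs := xs) hbot hlsc hb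
    have hL_eq : L = {u : X | recAt f x₀ u ≤ ((xs u : ℝ) : EReal)} ∩
        (fun u : X => -u) ⁻¹' {u : X | recAt f x₀ u ≤ ((xs u : ℝ) : EReal)} := by
      apply Set.Subset.antisymm
      · rintro u ⟨h1, h2⟩
        refine ⟨h1.le, ?_⟩
        rw [Set.mem_preimage, Set.mem_setOf_eq, h2, map_neg]
      · rintro u ⟨h1, h2⟩
        rw [Set.mem_preimage, Set.mem_setOf_eq] at h2
        exact hmem_of_Q u (qp_of_recAt_le hbot hconv hlsc hb h1)
          (qp_of_recAt_le hbot hconv hlsc hb h2)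
    rw [hL_eq]
    exact hA.inter (hA.preimage continuous_neg)
  refine ⟨hclosed, ⟨⟨⟨⟨L, ?_⟩, h0L⟩, ?_⟩, rfl⟩, hdom, htopset, hP⟩
  · intro a c ha hc
    obtain ⟨hQa, hQan⟩ := hQ_of_mem a ha
    obtain ⟨hQc, hQcn⟩ := hQ_of_mem c hc
    refine hmem_of_Q _ (qp_add hbot hQa hQc) ?_
    rw [neg_add]
    exact qp_add hbot hQan hQcn
  · intro c u hu
    obtain ⟨hQu, hQun⟩ := hQ_of_mem u hu
    rcases lt_trichotomy c 0 with hc | hc | hc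
    · refine hmem_of_Q _ ?_ ?_
      · rw [show c • u = (-c) • (-u) from (neg_smul_neg c u).symm]
        exact qp_smul_pos (by linarith) hQun
      · rw [show -(c • u) = (-c) • u from (neg_smul c u).symm]
        exact qp_smul_pos (by linarith) hQu
    · rw [hc, zero_smul]; exact h0L
    · refine hmem_of_Q _ (qp_smul_pos hc hQu) ?_
      rw [← smul_neg]
      exact qp_smul_pos hc hQun
end
end

section
/- Let (X, ⟨·,·⟩) be a real Hilbert space (X* identified with X via the Riesz theorem) and let f ∈ Γ(X) satisfy qri cl(dom f*) ≠ ∅. Then there exist a unique closed linear subspace Y of X, a unique essentially directionally coercive function c ∈ Γ(Z) with Z := Y^⊥, and a unique v ∈ Y such that f = c ∘ Pr_Z + ⟨·, v⟩, where Pr_Z is the orthogonal projection of X onto Z. More precisely, Y = L_f, c = f|_Z, and v = Pr_Y(x*) for some (any) x* ∈ cl(dom f*), where Pr_Y = I − Pr_Z. -/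
open Filter Topology Set Pointwise TopologicalSpace

noncomputable section

section Hilbert

open RealInnerProductSpace

variable {X : Type*} [NormedAddCommGroup X] [InnerProductSpace ℝ X] [CompleteSpace X]

/-- Fenchel conjugate in a Hilbert space (dual identified with the space via Riesz). -/
def hConj (f : X → EReal) (y : X) : EReal :=
  ⨆ x : X, ((⟪x, y⟫ : ℝ) : EReal) - f x

/-- Domain of the Hilbert-space conjugate. -/
def hDomConj (f : X → EReal) : Set X := {y | hConj f y ≠ ⊤}

/-- The set `L_f` (computed from `y ∈ cl (dom f*)` and a base point `x₀ ∈ dom f`). -/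
def hLSet (f : X → EReal) (x₀ y : X) : Set X :=
  {u | recAt f x₀ u = ((⟪u, y⟫ : ℝ) : EReal) ∧
       recAt f x₀ (-u) = ((-⟪u, y⟫ : ℝ) : EReal)}

/-- A valid triple `(Y, c, v)` in the decomposition `f = c ∘ Pr_Z + ⟨·, v⟩`, `Z := Yᗮ`:
`Y` is a closed linear subspace, `c ∈ Γ(Z)` is essentially directionally coercive, `v ∈ Y`,
every `x` decomposes as `x = (x - z) + z` with `x - z ∈ Y`, `z ∈ Z`, and on such a
decomposition `f x = c z + ⟪x, v⟫`. -/
def GoodTriple (f : X → EReal) (Y : Submodule ℝ X) (c : ↥(Yᗮ) → EReal) (v : X) : Prop :=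
  IsClosed (Y : Set X) ∧ GammaFn c ∧
  (∃ w : ↥(Yᗮ), DirCoercive (fun z : ↥(Yᗮ) => c z - ((⟪z, w⟫ : ℝ) : EReal))) ∧
  v ∈ Y ∧
  (∀ x : X, ∃ z : ↥(Yᗮ), x - (z : X) ∈ Y) ∧
  (∀ x : X, ∀ z : ↥(Yᗮ), x - (z : X) ∈ Y → f x = c z + ((⟪x, v⟫ : ℝ) : EReal))

namespace Stmt18Aux

lemma ereal_le_of_forall_eps {a : ℝ} {b : EReal}
    (h : ∀ ε : ℝ, 0 < ε → ((a - ε : ℝ) : EReal) ≤ b) : (a : EReal) ≤ b := by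
  by_contra hc
  push_neg at hc
  have hb1 : ((a - 1 : ℝ) : EReal) ≤ b := h 1 one_pos
  have hbbot : b ≠ ⊥ := fun hb => by
    rw [hb, le_bot_iff] at hb1; exact EReal.coe_ne_bot _ hb1
  have hbtop : b ≠ ⊤ := (hc.trans (EReal.coe_lt_top a)).ne
  obtain ⟨r, rfl⟩ : ∃ r : ℝ, b = (r : EReal) := ⟨b.toReal, (EReal.coe_toReal hbtop hbbot).symm⟩
  have hra : r < a := by exact_mod_cast hc
  have := h ((a - r) / 2) (by linarith)
  rw [EReal.coe_le_coe_iff] at this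
  linarith

lemma epi_closed {E : Type*} [TopologicalSpace E] {f : E → EReal}
    (hf : LowerSemicontinuous f) : IsClosed {p : E × ℝ | f p.1 ≤ (p.2 : EReal)} := by
  rw [← isOpen_compl_iff, isOpen_iff_mem_nhds]
  rintro ⟨x, t⟩ hp
  simp only [mem_compl_iff, mem_setOf_eq, not_le] at hp
  obtain ⟨z, htz, hzf⟩ := exists_between hp
  have hztop : z ≠ ⊤ := (hzf.trans_le le_top).ne
  have hzbot : z ≠ ⊥ := ((EReal.bot_lt_coe t).trans htz).ne'
  obtain ⟨y, rfl⟩ : ∃ y : ℝ, z = (y : EReal) := ⟨z.toReal, (EReal.coe_toReal hztop hzbot).symm⟩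
  have hty : t < y := by exact_mod_cast htz
  rw [nhds_prod_eq]
  refine Filter.mem_of_superset (Filter.prod_mem_prod (hf x _ hzf) (Iio_mem_nhds hty)) ?_
  rintro ⟨x', t'⟩ ⟨h1, h2⟩
  simp only [mem_compl_iff, mem_setOf_eq, not_le]
  exact lt_trans (by exact_mod_cast h2) h1

lemma hConj_le_of_minorant {f : X → EReal} {y : X} {β : ℝ}
    (hmin : ∀ p, ((⟪p, y⟫ - β : ℝ) : EReal) ≤ f p) : hConj f y ≤ (β : EReal) := by
  refine iSup_le fun p => ?_
  calc ((⟪p, y⟫ : ℝ) : EReal) - f p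
      ≤ ((⟪p, y⟫ : ℝ) : EReal) - ((⟪p, y⟫ - β : ℝ) : EReal) :=
        EReal.sub_le_sub le_rfl (hmin p)
    _ = (β : EReal) := by rw [← EReal.coe_sub]; norm_num

lemma mem_domConj_of_minorant {f : X → EReal} {y : X} {β : ℝ}
    (hmin : ∀ p, ((⟪p, y⟫ - β : ℝ) : EReal) ≤ f p) : y ∈ hDomConj f :=
  fun h => absurd (h ▸ hConj_le_of_minorant hmin) (by simp)

lemma exists_minorant_of_mem_domConj {f : X → EReal} (hfne : ∀ x, f x ≠ ⊥)
    {p₀ : X} (hp₀ : f p₀ ≠ ⊤) {y : X} (hy : y ∈ hDomConj f) :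
    ∃ β : ℝ, ∀ p, ((⟪p, y⟫ - β : ℝ) : EReal) ≤ f p := by
  have hne_top : hConj f y ≠ ⊤ := hy
  have hne_bot : hConj f y ≠ ⊥ := by
    intro hb
    have hle : ((⟪p₀, y⟫ : ℝ) : EReal) - f p₀ ≤ hConj f y := by
      unfold hConj; exact le_iSup (fun x => ((⟪x, y⟫ : ℝ) : EReal) - f x) p₀
    rw [hb, le_bot_iff] at hle
    obtain ⟨r, hr⟩ : ∃ r : ℝ, f p₀ = (r : EReal) :=
      ⟨(f p₀).toReal, (EReal.coe_toReal hp₀ (hfne p₀)).symm⟩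
    rw [hr, ← EReal.coe_sub] at hle
    exact EReal.coe_ne_bot _ hle
  refine ⟨(hConj f y).toReal, fun p => ?_⟩
  have hβ : ((⟪p, y⟫ : ℝ) : EReal) - f p ≤ ((hConj f y).toReal : EReal) := by
    rw [EReal.coe_toReal hne_top hne_bot]
    unfold hConj; exact le_iSup (fun x => ((⟪x, y⟫ : ℝ) : EReal) - f x) p
  rcases eq_or_ne (f p) ⊤ with h | h
  · rw [h]; exact le_top
  · obtain ⟨m, hm⟩ : ∃ m : ℝ, f p = (m : EReal) :=
      ⟨(f p).toReal, (EReal.coe_toReal h (hfne p)).symm⟩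
    rw [hm, ← EReal.coe_sub, EReal.coe_le_coe_iff] at hβ
    rw [hm, EReal.coe_le_coe_iff]
    linarith

lemma term_le_recAt {E : Type*} [AddCommGroup E] [Module ℝ E] (f : E → EReal) (x₀ u : E)
    {t : ℝ} (ht : 0 < t) :
    ((t⁻¹ : ℝ) : EReal) * (f (x₀ + t • u) - f x₀) ≤ recAt f x₀ u := by
  unfold recAt
  exact le_iSup₂ (f := fun (t : ℝ) (_ : t ∈ Set.Ioi (0:ℝ)) =>
    ((t⁻¹ : ℝ) : EReal) * (f (x₀ + t • u) - f x₀)) t (Set.mem_Ioi.mpr ht)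

lemma recAt_of_affine {E : Type*} [AddCommGroup E] [Module ℝ E] {f : E → EReal} {x₀ u : E}
    {a κ : ℝ} (h₀ : f x₀ = (a : EReal))
    (h : ∀ t : ℝ, 0 < t → f (x₀ + t • u) = ((a + t * κ : ℝ) : EReal)) :
    recAt f x₀ u = (κ : EReal) := by
  have hterm : ∀ t : ℝ, 0 < t →
      ((t⁻¹ : ℝ) : EReal) * (f (x₀ + t • u) - f x₀) = (κ : EReal) := by
    intro t ht
    rw [h t ht, h₀, ← EReal.coe_sub, ← EReal.coe_mul]
    congr 1
    field_simp
    ring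
  unfold recAt
  refine le_antisymm (iSup₂_le fun t ht => le_of_eq (hterm t ht)) ?_
  rw [← hterm 1 one_pos]
  exact le_iSup₂ (f := fun (t : ℝ) (_ : t ∈ Set.Ioi (0:ℝ)) =>
    ((t⁻¹ : ℝ) : EReal) * (f (x₀ + t • u) - f x₀)) (1 : ℝ) (Set.mem_Ioi.mpr one_pos)

lemma inner_le_recAt {f : X → EReal} {y : X} {β : ℝ}
    (hmin : ∀ p, ((⟪p, y⟫ - β : ℝ) : EReal) ≤ f p) {x₀ : X} {a : ℝ} (h₀ : f x₀ = (a : EReal))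
    (u : X) : ((⟪u, y⟫ : ℝ) : EReal) ≤ recAt f x₀ u := by
  apply ereal_le_of_forall_eps
  intro ε hε
  set C : ℝ := ⟪x₀, y⟫ - β - a with hC
  obtain ⟨t, ht0, htC⟩ : ∃ t : ℝ, 0 < t ∧ -ε ≤ C / t := by
    refine ⟨max 1 (-C / ε), lt_of_lt_of_le one_pos (le_max_left _ _), ?_⟩
    set t := max 1 (-C / ε)
    have ht0 : (0:ℝ) < t := lt_of_lt_of_le one_pos (le_max_left _ _)
    rcases le_or_gt 0 C with hc | hc
    · have : (0:ℝ) ≤ C / t := div_nonneg hc ht0.le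
      linarith
    · have ht : -C / ε ≤ t := le_max_right _ _
      rw [neg_le, ← neg_div, div_le_iff₀ ht0]
      rw [div_le_iff₀ hε] at ht
      linarith
  calc ((⟪u, y⟫ - ε : ℝ) : EReal)
      ≤ ((t⁻¹ * ((⟪x₀ + t • u, y⟫ - β) - a) : ℝ) : EReal) := by
        rw [EReal.coe_le_coe_iff, inner_add_left, real_inner_smul_left]
        have hexp : t⁻¹ * (⟪x₀, y⟫ + t * ⟪u, y⟫ - β - a) = ⟪u, y⟫ + C / t := by
          field_simp [hC]; ring
        rw [show ⟪x₀, y⟫ + t * ⟪u, y⟫ - β - a = (⟪x₀, y⟫ + t * ⟪u,y⟫ - β) - a by ring] at hexp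
        rw [hexp]
        linarith
    _ ≤ ((t⁻¹ : ℝ) : EReal) * (f (x₀ + t • u) - f x₀) := by
        rw [EReal.coe_mul]
        refine mul_le_mul_of_nonneg_left ?_ (by exact_mod_cast inv_nonneg.mpr ht0.le)
        rw [h₀, EReal.coe_sub]
        exact EReal.sub_le_sub (hmin _) le_rfl
    _ ≤ recAt f x₀ u := term_le_recAt f x₀ u ht0


lemma fenchel_minorant {f : X → EReal} (hf : GammaFn f)
    {y₀ : X} (hy₀ : y₀ ∈ hDomConj f) (x : X) (r : ℝ) (hr : (r : EReal) < f x) :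
    ∃ (y : X) (β : ℝ), (∀ p, ((⟪p, y⟫ - β : ℝ) : EReal) ≤ f p) ∧ r < ⟪x, y⟫ - β := by
  obtain ⟨p₀, hp₀⟩ := hf.1
  have hfne := hf.2.1
  obtain ⟨a₀, ha₀⟩ : ∃ a : ℝ, f p₀ = (a : EReal) :=
    ⟨(f p₀).toReal, (EReal.coe_toReal hp₀ (hfne p₀)).symm⟩
  have hxE : (x, r) ∉ {p : X × ℝ | f p.1 ≤ (p.2 : EReal)} := fun h => absurd h (not_le.mpr hr)
  obtain ⟨φ, s, hφx, hφE⟩ :=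
    geometric_hahn_banach_point_closed hf.2.2.1 (epi_closed hf.2.2.2) hxE
  set yg : X := (InnerProductSpace.toDual ℝ X).symm
      ((φ.comp (ContinuousLinearMap.inl ℝ X ℝ)) : X →L[ℝ] ℝ) with hyg
  set cc : ℝ := φ (0, 1) with hcc
  have hφ : ∀ (p : X) (t : ℝ), φ (p, t) = ⟪p, yg⟫ + t * cc := by
    intro p t
    have h1 : (p, t) = (p, (0:ℝ)) + t • ((0 : X), (1 : ℝ)) := by
      simp [Prod.ext_iff]
    rw [h1, map_add, map_smul]
    have h2 : φ (p, (0:ℝ)) = ⟪p, yg⟫ := by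
      rw [hyg, real_inner_comm, InnerProductSpace.toDual_symm_apply]
      rfl
    rw [h2, smul_eq_mul]
  -- memberships of epigraph
  have hmemE : ∀ (p : X) (m t : ℝ), f p = (m : EReal) → m ≤ t →
      s < ⟪p, yg⟫ + t * cc := by
    intro p m t hm hmt
    have : (p, t) ∈ {p : X × ℝ | f p.1 ≤ (p.2 : EReal)} := by
      simp only [mem_setOf_eq, hm]; exact_mod_cast hmt
    have := hφE _ this
    rwa [hφ] at this
  have hccpos : 0 ≤ cc := by
    by_contra hneg
    push_neg at hneg
    set t : ℝ := max a₀ ((s - ⟪p₀, yg⟫) / cc) with ht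
    have h1 : s < ⟪p₀, yg⟫ + t * cc := hmemE p₀ a₀ t ha₀ (le_max_left _ _)
    have h2 : (s - ⟪p₀, yg⟫) / cc ≤ t := le_max_right _ _
    have h3 : t * cc ≤ ((s - ⟪p₀, yg⟫) / cc) * cc := by
      exact mul_le_mul_of_nonpos_right h2 hneg.le
    rw [div_mul_cancel₀ _ (ne_of_lt hneg)] at h3
    linarith
  have hφx' : ⟪x, yg⟫ + r * cc < s := by rw [← hφ]; exact hφx
  rcases lt_or_eq_of_le hccpos with hpos | hzero
  · -- cc > 0
    refine ⟨-(cc⁻¹) • yg, -(s / cc), fun p => ?_, ?_⟩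
    · rcases eq_or_ne (f p) ⊤ with h | h
      · rw [h]; exact le_top
      obtain ⟨m, hm⟩ : ∃ m : ℝ, f p = (m : EReal) :=
        ⟨(f p).toReal, (EReal.coe_toReal h (hfne p)).symm⟩
      have h1 : s < ⟪p, yg⟫ + m * cc := hmemE p m m hm le_rfl
      rw [hm, EReal.coe_le_coe_iff, real_inner_smul_right]
      have : (s - ⟪p, yg⟫) / cc < m := by rw [div_lt_iff₀ hpos]; linarith
      have hdiv : -(cc⁻¹) * ⟪p, yg⟫ - -(s / cc) = (s - ⟪p, yg⟫) / cc := by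
        field_simp; ring
      linarith [hdiv ▸ this]
    · rw [real_inner_smul_right]
      have : r < (s - ⟪x, yg⟫) / cc := by rw [lt_div_iff₀ hpos]; linarith
      have hdiv : -(cc⁻¹) * ⟪x, yg⟫ - -(s / cc) = (s - ⟪x, yg⟫) / cc := by
        field_simp; ring
      linarith [hdiv ▸ this]
  · -- cc = 0
    obtain ⟨β₀, hβ₀⟩ := exists_minorant_of_mem_domConj hfne hp₀ hy₀
    have hdomlt : ∀ (p : X), f p ≠ ⊤ → s < ⟪p, yg⟫ := by
      intro p h
      obtain ⟨m, hm⟩ : ∃ m : ℝ, f p = (m : EReal) :=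
        ⟨(f p).toReal, (EReal.coe_toReal h (hfne p)).symm⟩
      have := hmemE p m m hm le_rfl
      rw [← hzero] at this
      simpa using this
    have hxlt : ⟪x, yg⟫ < s := by rw [← hzero] at hφx'; simpa using hφx'
    set D : ℝ := s - ⟪x, yg⟫ with hD
    have hDpos : 0 < D := by simp [hD]; linarith
    set lam : ℝ := max 0 ((r - (⟪x, y₀⟫ - β₀)) / D + 1) with hlam
    have hlam0 : 0 ≤ lam := le_max_left _ _
    refine ⟨y₀ - lam • yg, β₀ - lam * s, fun p => ?_, ?_⟩
    · rcases eq_or_ne (f p) ⊤ with h | h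
      · rw [h]; exact le_top
      obtain ⟨m, hm⟩ : ∃ m : ℝ, f p = (m : EReal) :=
        ⟨(f p).toReal, (EReal.coe_toReal h (hfne p)).symm⟩
      have h1 : s < ⟪p, yg⟫ := hdomlt p h
      have h2 : ⟪p, y₀⟫ - β₀ ≤ m := by
        have := hβ₀ p; rw [hm, EReal.coe_le_coe_iff] at this; exact this
      rw [hm, EReal.coe_le_coe_iff, inner_sub_right, real_inner_smul_right]
      nlinarith
    · rw [inner_sub_right, real_inner_smul_right]
      have h2 : (r - (⟪x, y₀⟫ - β₀)) / D + 1 ≤ lam := le_max_right _ _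
      have h3 : r - (⟪x, y₀⟫ - β₀) < lam * D := by
        have hmul := mul_le_mul_of_nonneg_right h2 hDpos.le
        have hq : (r - (⟪x, y₀⟫ - β₀)) / D * D = r - (⟪x, y₀⟫ - β₀) :=
          div_mul_cancel₀ _ (ne_of_gt hDpos)
        nlinarith
      have : ⟪x, y₀⟫ - lam * ⟪x, yg⟫ - (β₀ - lam * s) = (⟪x, y₀⟫ - β₀) + lam * D := by
        simp [hD]; ring
      linarith [this]


lemma affine_le {f : X → EReal} (hf : GammaFn f) {y₀ : X} (hy₀ : y₀ ∈ hDomConj f)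
    {u ys : X} (hu : ∀ y ∈ hDomConj f, ⟪u, y⟫ = ⟪u, ys⟫) (x : X) :
    f (x + u) ≤ f x + ((⟪u, ys⟫ : ℝ) : EReal) := by
  rcases eq_or_ne (f x) ⊤ with h | h
  · rw [h, EReal.top_add_coe]; exact le_top
  obtain ⟨a, ha⟩ : ∃ a : ℝ, f x = (a : EReal) :=
    ⟨(f x).toReal, (EReal.coe_toReal h (hf.2.1 x)).symm⟩
  by_contra hc
  push_neg at hc
  rw [ha, ← EReal.coe_add] at hc
  obtain ⟨ρ, hρ1, hρ2⟩ : ∃ ρ : ℝ, a + ⟪u, ys⟫ < ρ ∧ (ρ : EReal) < f (x + u) := by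
    rcases eq_or_ne (f (x + u)) ⊤ with h2 | h2
    · exact ⟨a + ⟪u, ys⟫ + 1, lt_add_one _, by rw [h2]; exact EReal.coe_lt_top _⟩
    · obtain ⟨m, hm⟩ : ∃ m : ℝ, f (x + u) = (m : EReal) :=
        ⟨(f (x + u)).toReal, (EReal.coe_toReal h2 (hf.2.1 _)).symm⟩
      rw [hm] at hc ⊢
      have hcm : a + ⟪u, ys⟫ < m := by exact_mod_cast hc
      exact ⟨(a + ⟪u, ys⟫ + m) / 2, by linarith, by exact_mod_cast by linarith⟩
  obtain ⟨y, β, hmin, hval⟩ := fenchel_minorant hf hy₀ (x + u) ρ hρ2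
  have hyd : y ∈ hDomConj f := mem_domConj_of_minorant hmin
  have h1 : ⟪x, y⟫ - β ≤ a := by
    have := hmin x; rw [ha, EReal.coe_le_coe_iff] at this; exact this
  rw [inner_add_left, hu y hyd] at hval
  linarith

lemma affine_eq {f : X → EReal} (hf : GammaFn f) {y₀ : X} (hy₀ : y₀ ∈ hDomConj f)
    {u ys : X} (hu : ∀ y ∈ hDomConj f, ⟪u, y⟫ = ⟪u, ys⟫) (x : X) :
    f (x + u) = f x + ((⟪u, ys⟫ : ℝ) : EReal) := by
  have hneg : ∀ y ∈ hDomConj f, ⟪-u, y⟫ = ⟪-u, ys⟫ := by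
    intro y hy; rw [inner_neg_left, inner_neg_left, hu y hy]
  have h1 := affine_le hf hy₀ hu x
  have h2 := affine_le hf hy₀ hneg (x + u)
  rw [add_neg_cancel_right, inner_neg_left] at h2
  rcases eq_or_ne (f x) ⊤ with h | h
  · rw [h, EReal.top_add_coe]
    by_contra h3
    have h4 : f (x + u) ≠ ⊥ := hf.2.1 _
    obtain ⟨m, hm⟩ : ∃ m : ℝ, f (x + u) = (m : EReal) :=
      ⟨(f (x + u)).toReal, (EReal.coe_toReal h3 h4).symm⟩
    rw [hm, h, ← EReal.coe_add] at h2
    exact EReal.coe_ne_top _ (top_le_iff.mp h2)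
  obtain ⟨a, ha⟩ : ∃ a : ℝ, f x = (a : EReal) :=
    ⟨(f x).toReal, (EReal.coe_toReal h (hf.2.1 x)).symm⟩
  rw [ha, ← EReal.coe_add] at h1 ⊢
  have h3 : f (x + u) ≠ ⊤ := fun ht => by
    rw [ht] at h1; exact EReal.coe_ne_top _ (top_le_iff.mp h1)
  obtain ⟨m, hm⟩ : ∃ m : ℝ, f (x + u) = (m : EReal) :=
    ⟨(f (x + u)).toReal, (EReal.coe_toReal h3 (hf.2.1 _)).symm⟩
  rw [hm, EReal.coe_le_coe_iff] at h1
  rw [hm, ha, ← EReal.coe_add, EReal.coe_le_coe_iff] at h2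
  rw [hm, EReal.coe_eq_coe_iff]
  linarith

end Stmt18Aux

open RealInnerProductSpace in
theorem stmt18
    (f : X → EReal) (hf : GammaFn f) (x₀ : X) (hx₀ : f x₀ ≠ ⊤)
    (ys : X) (hys : ys ∈ closure (hDomConj f))
    (hqri : (qri (closure (hDomConj f))).Nonempty) :
    ∃ Y : Submodule ℝ X, ∃ c : ↥(Yᗮ) → EReal, ∃ v : X,
      GoodTriple f Y c v ∧
      (∀ Y' : Submodule ℝ X, ∀ c' : ↥(Y'ᗮ) → EReal, ∀ v' : X,
        GoodTriple f Y' c' v' → Y' = Y ∧ v' = v ∧ HEq c' c) ∧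
      (Y : Set X) = hLSet f x₀ ys ∧
      (∀ z : ↥(Yᗮ), c z = f (z : X)) ∧
      (∀ w ∈ closure (hDomConj f), w - v ∈ Yᗮ) := by
  classical
  obtain ⟨y₀, hy₀⟩ : (hDomConj f).Nonempty := closure_nonempty_iff.mp ⟨ys, hys⟩
  have hfne : ∀ x, f x ≠ ⊥ := hf.2.1
  obtain ⟨a₀, ha₀⟩ : ∃ a : ℝ, f x₀ = (a : EReal) :=
    ⟨(f x₀).toReal, (EReal.coe_toReal hx₀ (hfne x₀)).symm⟩
  set A : Set X := closure (hDomConj f) with hA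
  have hext : ∀ u cx : X, (∀ y ∈ hDomConj f, ⟪u, y⟫ = ⟪u, cx⟫) →
      ∀ y ∈ A, ⟪u, y⟫ = ⟪u, cx⟫ := by
    intro u cx h y hy
    have hclosed : IsClosed {y : X | ⟪u, y⟫ = ⟪u, cx⟫} :=
      isClosed_eq (Continuous.inner continuous_const continuous_id) continuous_const
    exact closure_minimal h hclosed hy
  set Y : Submodule ℝ X :=
    { carrier := {u : X | ∀ y ∈ A, ⟪u, y⟫ = ⟪u, ys⟫}
      add_mem' := fun ha hb y hy => by
        rw [inner_add_left, inner_add_left, ha y hy, hb y hy]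
      zero_mem' := fun y hy => by rw [inner_zero_left, inner_zero_left]
      smul_mem' := fun cr a ha y hy => by
        rw [real_inner_smul_left, real_inner_smul_left, ha y hy] } with hYdef
  have hmemY : ∀ u : X, u ∈ Y ↔ ∀ y ∈ A, ⟪u, y⟫ = ⟪u, ys⟫ := fun u => Iff.rfl
  have hYclosed : IsClosed (Y : Set X) := by
    have he : (Y : Set X) = ⋂ y ∈ A, {u : X | ⟪u, y⟫ = ⟪u, ys⟫} := by
      ext u
      simp only [Set.mem_iInter, mem_setOf_eq]
      exact Iff.rfl
    rw [he]
    exact isClosed_biInter fun y _ =>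
      isClosed_eq (Continuous.inner continuous_id continuous_const)
        (Continuous.inner continuous_id continuous_const)
  haveI : CompleteSpace Y := hYclosed.completeSpace_coe
  have horth : ∀ a : X, a ∈ Y → ∀ b : X, b ∈ Yᗮ → ⟪a, b⟫ = 0 :=
    fun a ha b hb => (Submodule.mem_orthogonal Y b).mp hb a ha
  have hproj : ∀ x : X, ∃ z : ↥(Yᗮ), x - (z : X) ∈ Y := by
    intro x
    refine ⟨⟨x - (Y.orthogonalProjectionOnto x : X),
      Submodule.sub_starProjection_mem_orthogonal x⟩, ?_⟩
    show x - (x - (Y.orthogonalProjectionOnto x : X)) ∈ Y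
    rw [sub_sub_cancel]
    exact SetLike.coe_mem _
  set v : X := (Y.orthogonalProjectionOnto ys : X) with hvdef
  have hvY : v ∈ Y := SetLike.coe_mem _
  have hysv : ys - v ∈ Yᗮ := Submodule.sub_starProjection_mem_orthogonal ys
  have haffY : ∀ u, u ∈ Y → ∀ x : X, f (x + u) = f x + ((⟪u, ys⟫ : ℝ) : EReal) :=
    fun u hu x => Stmt18Aux.affine_eq hf hy₀ (fun y hy => hu y (subset_closure hy)) x
  set c : ↥(Yᗮ) → EReal := fun z => f (z : X) with hcdef
  have hdec : ∀ (x : X) (z : ↥(Yᗮ)), x - (z : X) ∈ Y →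
      f x = c z + ((⟪x, v⟫ : ℝ) : EReal) := by
    intro x z hxz
    have h1 : f ((z : X) + (x - (z : X))) = f (z : X) + ((⟪x - (z : X), ys⟫ : ℝ) : EReal) :=
      haffY _ hxz (z : X)
    have he : (z : X) + (x - (z : X)) = x := by abel
    rw [he] at h1
    have h2 : ⟪x - (z : X), ys⟫ = ⟪x, v⟫ := by
      have e1 : ⟪x - (z : X), ys - v⟫ = 0 := horth _ hxz _ hysv
      have e2 : ⟪v, (z : X)⟫ = 0 := horth v hvY _ (SetLike.coe_mem z)
      have e3 : ⟪x - (z : X), v⟫ = ⟪x, v⟫ - ⟪(z : X), v⟫ := inner_sub_left _ _ _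
      have e4 : ⟪(z : X), v⟫ = ⟪v, (z : X)⟫ := real_inner_comm _ _
      rw [inner_sub_right] at e1
      linarith
    rw [h1, h2]
  obtain ⟨z₀, hz₀⟩ := hproj x₀
  have hfz₀ : c z₀ ≠ ⊤ := by
    intro htop
    have hd := hdec x₀ z₀ hz₀
    rw [ha₀, htop, EReal.top_add_coe] at hd
    exact EReal.coe_ne_top a₀ hd
  have hΓc : GammaFn c := by
    refine ⟨⟨z₀, hfz₀⟩, fun z => hfne (z : X), ?_, ?_⟩
    · exact hf.2.2.1.linear_preimage
        (((Yᗮ).subtype).prodMap (LinearMap.id : ℝ →ₗ[ℝ] ℝ))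
    · intro z r hr
      exact (continuous_subtype_val.tendsto z).eventually (hf.2.2.2 (z : X) r hr)
  -- quasi relative interior point and coercivity
  obtain ⟨q, hq⟩ := hqri
  have hqA : q ∈ A := hq.1
  obtain ⟨S, hS⟩ := hq.2
  set w : ↥(Yᗮ) := ⟨q - (Y.orthogonalProjectionOnto q : X),
    Submodule.sub_starProjection_mem_orthogonal q⟩ with hwdef
  have hqw : q - (w : X) ∈ Y := by
    show q - (q - (Y.orthogonalProjectionOnto q : X)) ∈ Y
    rw [sub_sub_cancel]
    exact SetLike.coe_mem _
  have hwq : ∀ u : X, u ∈ Yᗮ → ⟪u, (w : X)⟫ = ⟪u, q⟫ := by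
    intro u hu
    have h2 : ⟪q - (w : X), u⟫ = 0 := horth _ hqw u hu
    rw [inner_sub_left] at h2
    have c1 : ⟪q, u⟫ = ⟪u, q⟫ := real_inner_comm _ _
    have c2 : ⟪(w : X), u⟫ = ⟪u, (w : X)⟫ := real_inner_comm _ _
    linarith
  have hsep : ∀ u : X, u ∈ Yᗮ → u ≠ 0 → ∃ y ∈ hDomConj f, ⟪u, q⟫ < ⟪u, y⟫ := by
    intro u hu hu0
    by_contra hc
    push_neg at hc
    have hcA : ∀ y ∈ A, ⟪u, y⟫ ≤ ⟪u, q⟫ := by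
      intro y hy
      have hclosed : IsClosed {y : X | ⟪u, y⟫ ≤ ⟪u, q⟫} :=
        isClosed_le (Continuous.inner continuous_const continuous_id) continuous_const
      exact closure_minimal hc hclosed hy
    have hcone : ∀ x ∈ closure (coneGen A q), ⟪u, x⟫ ≤ 0 := by
      intro x hx
      have hclosed : IsClosed {x : X | ⟪u, x⟫ ≤ 0} :=
        isClosed_le (Continuous.inner continuous_const continuous_id) continuous_const
      refine closure_minimal ?_ hclosed hx
      rintro x' ⟨t, ht, b, hb, rfl⟩
      rw [mem_setOf_eq, real_inner_smul_right, inner_sub_right]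
      have := hcA b hb
      nlinarith
    rw [hS] at hcone
    have hzero : ∀ y ∈ A, ⟪u, y - q⟫ = 0 := by
      intro y hy
      have h1 : y - q ∈ (S : Set X) := by
        rw [← hS]
        exact subset_closure ⟨1, zero_le_one, y, hy, (one_smul ℝ (y - q)).symm⟩
      have h2 : -(y - q) ∈ (S : Set X) := S.neg_mem h1
      have e1 := hcone _ h1
      have e2 := hcone _ h2
      rw [inner_neg_right] at e2
      linarith
    have huY : u ∈ Y := by
      intro y hy
      have e1 := hzero y hy
      have e2 := hzero ys hys
      rw [inner_sub_right] at e1 e2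
      linarith
    have : ⟪u, u⟫ = 0 := horth u huY u hu
    exact hu0 (inner_self_eq_zero.mp this)
  have hcoer : DirCoercive (fun z : ↥(Yᗮ) => c z - ((⟪z, w⟫ : ℝ) : EReal)) := by
    intro z u hu0
    have hu0' : (u : X) ≠ 0 := fun h => hu0 (Submodule.coe_eq_zero.mp h)
    obtain ⟨y, hy, hlt⟩ := hsep (u : X) (SetLike.coe_mem u) hu0'
    obtain ⟨β, hβ⟩ := Stmt18Aux.exists_minorant_of_mem_domConj hfne hx₀ hy
    rw [EReal.tendsto_nhds_top_iff_real]
    intro M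
    set D : ℝ := ⟪(u : X), y⟫ - ⟪(u : X), q⟫ with hD
    have hDpos : 0 < D := by simp only [hD]; linarith
    set C : ℝ := ⟪(z : X), y⟫ - β - ⟪(z : X), (w : X)⟫ with hC
    filter_upwards [eventually_gt_atTop ((M - C) / D), eventually_gt_atTop 0] with t htD ht0
    have hinner : ((z + t • u : ↥(Yᗮ)) : X) = (z : X) + t • (u : X) := by
      push_cast
      ring_nf
    have hlow : ((⟪(z : X) + t • (u : X), y⟫ - β : ℝ) : EReal) ≤ c (z + t • u) := by
      show _ ≤ f (((z + t • u : ↥(Yᗮ))) : X)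
      rw [hinner]
      exact hβ _
    have hiw : (⟪(z + t • u : ↥(Yᗮ)), w⟫ : ℝ) = ⟪(z : X), (w : X)⟫ + t * ⟪(u : X), q⟫ := by
      rw [Submodule.coe_inner, hinner, inner_add_left, real_inner_smul_left,
        hwq (u : X) (SetLike.coe_mem u)]
    have key : ((C + t * D : ℝ) : EReal) ≤ c (z + t • u) - ((⟪(z + t • u : ↥(Yᗮ)), w⟫ : ℝ) : EReal) := by
      calc ((C + t * D : ℝ) : EReal)
          = ((((⟪(z : X) + t • (u : X), y⟫ - β) : ℝ) - (⟪(z : X), (w : X)⟫ + t * ⟪(u : X), q⟫) : ℝ) : EReal) := by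
            norm_cast
            rw [hinner, inner_add_left, real_inner_smul_left]
            simp only [hC, hD]
            ring
        _ = ((⟪(z : X) + t • (u : X), y⟫ - β : ℝ) : EReal) -
              ((⟪(z : X), (w : X)⟫ + t * ⟪(u : X), q⟫ : ℝ) : EReal) := EReal.coe_sub _ _
        _ ≤ c (z + t • u) - ((⟪(z + t • u : ↥(Yᗮ)), w⟫ : ℝ) : EReal) := by
            rw [hiw]
            exact EReal.sub_le_sub hlow le_rfl
    refine lt_of_lt_of_le ?_ key
    rw [EReal.coe_lt_coe_iff]
    have := (div_lt_iff₀ hDpos).mp htD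
    linarith
  have hGT : GoodTriple f Y c v := ⟨hYclosed, hΓc, ⟨w, hcoer⟩, hvY, hproj, hdec⟩
  have hYL : (Y : Set X) = hLSet f x₀ ys := by
    ext u
    constructor
    · intro hu
      refine ⟨?_, ?_⟩
      · refine Stmt18Aux.recAt_of_affine ha₀ ?_
        intro t ht
        rw [haffY (t • u) (Y.smul_mem t hu) x₀, ha₀, real_inner_smul_left, ← EReal.coe_add]
      · refine Stmt18Aux.recAt_of_affine ha₀ ?_
        intro t ht
        rw [haffY (t • (-u)) (Y.smul_mem t (Y.neg_mem hu)) x₀, ha₀, real_inner_smul_left,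
          inner_neg_left, ← EReal.coe_add]
    · rintro ⟨h1, h2⟩
      refine hext u ys ?_
      intro y' hy'
      obtain ⟨β, hβ⟩ := Stmt18Aux.exists_minorant_of_mem_domConj hfne hx₀ hy'
      have l1 := Stmt18Aux.inner_le_recAt hβ ha₀ u
      have l2 := Stmt18Aux.inner_le_recAt hβ ha₀ (-u)
      rw [h1, EReal.coe_le_coe_iff] at l1
      rw [h2, EReal.coe_le_coe_iff, inner_neg_left] at l2
      linarith
  have hwv : ∀ w' ∈ A, w' - v ∈ Yᗮ := by
    intro w' hw'
    rw [Submodule.mem_orthogonal]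
    intro t ht
    have h1 : ⟪t, w'⟫ = ⟪t, ys⟫ := ht w' hw'
    have h2 : ⟪t, ys - v⟫ = 0 := horth t ht _ hysv
    rw [inner_sub_right] at h2
    rw [inner_sub_right]
    linarith
  refine ⟨Y, c, v, hGT, ?_, hYL, fun z => rfl, hwv⟩
  rintro Y' c' v' ⟨hY'cl, hΓ', ⟨w', hw'⟩, hv'Y', hex', hdec'⟩
  obtain ⟨z₀', hz₀'⟩ := hex' x₀
  have hfx₀' : f x₀ = c' z₀' + ((⟪x₀, v'⟫ : ℝ) : EReal) := hdec' x₀ z₀' hz₀'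
  have hc'top : c' z₀' ≠ ⊤ := by
    intro h
    rw [h, EReal.top_add_coe, ha₀] at hfx₀'
    exact EReal.coe_ne_top a₀ hfx₀'
  obtain ⟨b₀, hb₀⟩ : ∃ b : ℝ, c' z₀' = (b : EReal) :=
    ⟨(c' z₀').toReal, (EReal.coe_toReal hc'top (hΓ'.2.1 _)).symm⟩
  have hab : a₀ = b₀ + ⟪x₀, v'⟫ := by
    rw [ha₀, hb₀, ← EReal.coe_add] at hfx₀'
    exact_mod_cast hfx₀'
  have hrec' : ∀ u, u ∈ Y' → recAt f x₀ u = ((⟪u, v'⟫ : ℝ) : EReal) := by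
    intro u hu
    refine Stmt18Aux.recAt_of_affine ha₀ ?_
    intro t ht
    have hmem : (x₀ + t • u) - (z₀' : X) ∈ Y' := by
      have he : (x₀ + t • u) - (z₀' : X) = (x₀ - (z₀' : X)) + t • u := by abel
      rw [he]
      exact Y'.add_mem hz₀' (Y'.smul_mem t hu)
    rw [hdec' _ z₀' hmem, hb₀, ← EReal.coe_add, EReal.coe_eq_coe_iff,
      inner_add_left, real_inner_smul_left, hab]
    ring
  have hconst' : ∀ u, u ∈ Y' → ∀ y ∈ A, ⟪u, y⟫ = ⟪u, v'⟫ := by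
    intro u hu
    refine hext u v' ?_
    intro y hy
    obtain ⟨β, hβ⟩ := Stmt18Aux.exists_minorant_of_mem_domConj hfne hx₀ hy
    have l1 := Stmt18Aux.inner_le_recAt hβ ha₀ u
    have l2 := Stmt18Aux.inner_le_recAt hβ ha₀ (-u)
    rw [hrec' u hu, EReal.coe_le_coe_iff] at l1
    rw [hrec' (-u) (Y'.neg_mem hu), EReal.coe_le_coe_iff, inner_neg_left, inner_neg_left] at l2
    linarith
  have hY'subY : ∀ u, u ∈ Y' → u ∈ Y := by
    intro u hu y hy
    rw [hconst' u hu y hy]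
    exact (hconst' u hu ys hys).symm
  have hYsubY' : ∀ u : X, u ∈ Y → u ∈ Y' := by
    intro u hu
    have huL : u ∈ hLSet f x₀ ys := hYL ▸ (hu : u ∈ (Y : Set X))
    obtain ⟨h1, h2⟩ := huL
    obtain ⟨zu, hzu⟩ := hex' u
    by_cases hz0 : zu = 0
    · rw [hz0] at hzu
      simpa using hzu
    exfalso
    set κ : ℝ := ⟪u, ys⟫ - ⟪u, v'⟫ with hκ
    have hup : ∀ t : ℝ, 0 < t → c' (z₀' + t • zu) ≤ ((b₀ + t * κ : ℝ) : EReal) := by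
      intro t ht
      have hcoe : ((z₀' + t • zu : ↥(Y'ᗮ)) : X) = (z₀' : X) + t • (zu : X) := by push_cast; ring_nf
      have hmem : (x₀ + t • u) - ((z₀' + t • zu : ↥(Y'ᗮ)) : X) ∈ Y' := by
        rw [hcoe]
        have he : (x₀ + t • u) - ((z₀' : X) + t • (zu : X)) =
            (x₀ - (z₀' : X)) + t • (u - (zu : X)) := by rw [smul_sub]; abel
        rw [he]
        exact Y'.add_mem hz₀' (Y'.smul_mem t hzu)
      have hfeq : f (x₀ + t • u) = c' (z₀' + t • zu) + ((⟪x₀ + t • u, v'⟫ : ℝ) : EReal) :=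
        hdec' _ _ hmem
      have hterm := Stmt18Aux.term_le_recAt f x₀ u ht
      rw [h1] at hterm
      rcases eq_or_ne (c' (z₀' + t • zu)) ⊤ with htop | htop
      · rw [htop, EReal.top_add_coe] at hfeq
        rw [hfeq, ha₀, EReal.top_sub_coe, EReal.coe_mul_top_of_pos (inv_pos.mpr ht)] at hterm
        exact absurd (top_le_iff.mp hterm) (EReal.coe_ne_top _)
      · obtain ⟨m, hm⟩ : ∃ m : ℝ, c' (z₀' + t • zu) = (m : EReal) :=
          ⟨(c' (z₀' + t • zu)).toReal, (EReal.coe_toReal htop (hΓ'.2.1 _)).symm⟩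
        rw [hfeq, hm, ← EReal.coe_add, ha₀, ← EReal.coe_sub, ← EReal.coe_mul,
          EReal.coe_le_coe_iff] at hterm
        rw [hm, EReal.coe_le_coe_iff]
        rw [inner_add_left, real_inner_smul_left] at hterm
        have h' := mul_le_mul_of_nonneg_left hterm (le_of_lt ht)
        rw [← mul_assoc, mul_inv_cancel₀ (ne_of_gt ht), one_mul] at h'
        simp only [hκ]
        nlinarith
    have hdn : ∀ t : ℝ, 0 < t → c' (z₀' + t • (-zu)) ≤ ((b₀ - t * κ : ℝ) : EReal) := by
      intro t ht
      have hcoe : ((z₀' + t • (-zu) : ↥(Y'ᗮ)) : X) = (z₀' : X) + t • (-(zu : X)) := by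
        push_cast; ring
      have hmem : (x₀ + t • (-u)) - ((z₀' + t • (-zu) : ↥(Y'ᗮ)) : X) ∈ Y' := by
        rw [hcoe]
        have he : (x₀ + t • (-u)) - ((z₀' : X) + t • (-(zu : X))) =
            (x₀ - (z₀' : X)) - t • (u - (zu : X)) := by
          rw [smul_neg, smul_neg, smul_sub]; abel
        rw [he]
        exact Y'.sub_mem hz₀' (Y'.smul_mem t hzu)
      have hfeq : f (x₀ + t • (-u)) = c' (z₀' + t • (-zu)) + ((⟪x₀ + t • (-u), v'⟫ : ℝ) : EReal) :=
        hdec' _ _ hmem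
      have hterm := Stmt18Aux.term_le_recAt f x₀ (-u) ht
      rw [h2] at hterm
      rcases eq_or_ne (c' (z₀' + t • (-zu))) ⊤ with htop | htop
      · rw [htop, EReal.top_add_coe] at hfeq
        rw [hfeq, ha₀, EReal.top_sub_coe, EReal.coe_mul_top_of_pos (inv_pos.mpr ht)] at hterm
        exact absurd (top_le_iff.mp hterm) (EReal.coe_ne_top _)
      · obtain ⟨m, hm⟩ : ∃ m : ℝ, c' (z₀' + t • (-zu)) = (m : EReal) :=
          ⟨(c' (z₀' + t • (-zu))).toReal, (EReal.coe_toReal htop (hΓ'.2.1 _)).symm⟩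
        rw [hfeq, hm, ← EReal.coe_add, ha₀, ← EReal.coe_sub, ← EReal.coe_mul,
          EReal.coe_le_coe_iff] at hterm
        rw [hm, EReal.coe_le_coe_iff]
        rw [inner_add_left, real_inner_smul_left, inner_neg_left] at hterm
        have h' := mul_le_mul_of_nonneg_left hterm (le_of_lt ht)
        rw [← mul_assoc, mul_inv_cancel₀ (ne_of_gt ht), one_mul] at h'
        simp only [hκ]
        nlinarith
    set B : ℝ := κ - ⟪(zu : X), (w' : X)⟫ with hB
    rcases le_or_gt B 0 with hBle | hBpos
    · have htend := hw' z₀' zu hz0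
      rw [EReal.tendsto_nhds_top_iff_real] at htend
      obtain ⟨t, hgt, ht0⟩ :=
        ((htend (b₀ - ⟪(z₀' : X), (w' : X)⟫)).and (eventually_gt_atTop 0)).exists
      have hiw : (⟪z₀' + t • zu, w'⟫ : ℝ) =
          ⟪(z₀' : X), (w' : X)⟫ + t * ⟪(zu : X), (w' : X)⟫ := by
        rw [Submodule.coe_inner]
        push_cast
        rw [inner_add_left, real_inner_smul_left]
      have hub : c' (z₀' + t • zu) - ((⟪z₀' + t • zu, w'⟫ : ℝ) : EReal) ≤
          ((b₀ + t * κ - (⟪(z₀' : X), (w' : X)⟫ + t * ⟪(zu : X), (w' : X)⟫) : ℝ) : EReal) := by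
        rw [hiw, EReal.coe_sub]
        exact EReal.sub_le_sub (hup t ht0) le_rfl
      have hcon := lt_of_lt_of_le hgt hub
      rw [EReal.coe_lt_coe_iff] at hcon
      have hint : 0 ≤ t * -B := mul_nonneg ht0.le (neg_nonneg.mpr hBle)
      rw [hB, neg_sub, mul_sub] at hint
      linarith
    · have htend := hw' z₀' (-zu) (neg_ne_zero.mpr hz0)
      rw [EReal.tendsto_nhds_top_iff_real] at htend
      obtain ⟨t, hgt, ht0⟩ :=
        ((htend (b₀ - ⟪(z₀' : X), (w' : X)⟫)).and (eventually_gt_atTop 0)).exists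
      have hiw : (⟪z₀' + t • (-zu), w'⟫ : ℝ) =
          ⟪(z₀' : X), (w' : X)⟫ - t * ⟪(zu : X), (w' : X)⟫ := by
        rw [Submodule.coe_inner]
        push_cast
        rw [inner_add_left, real_inner_smul_left, inner_neg_left]
        ring
      have hub : c' (z₀' + t • (-zu)) - ((⟪z₀' + t • (-zu), w'⟫ : ℝ) : EReal) ≤
          ((b₀ - t * κ - (⟪(z₀' : X), (w' : X)⟫ - t * ⟪(zu : X), (w' : X)⟫) : ℝ) : EReal) := by
        rw [hiw, EReal.coe_sub]
        exact EReal.sub_le_sub (hdn t ht0) le_rfl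
      have hcon := lt_of_lt_of_le hgt hub
      rw [EReal.coe_lt_coe_iff] at hcon
      have hint : 0 < t * B := mul_pos ht0 hBpos
      rw [hB, mul_sub] at hint
      linarith
  have hY'eq : Y' = Y := SetLike.ext fun u => ⟨hY'subY u, hYsubY' u⟩
  subst hY'eq
  refine ⟨rfl, ?_, ?_⟩
  · have hsub : v' - v ∈ Y := Y.sub_mem hv'Y' hvY
    have e1 : ⟪v' - v, ys⟫ = ⟪v' - v, v'⟫ := hconst' _ hsub ys hys
    have e2 : ⟪v' - v, ys - v⟫ = 0 := horth _ hsub _ hysv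
    have hzero : ⟪v' - v, v' - v⟫ = 0 := by
      rw [inner_sub_right] at e2 ⊢
      linarith
    exact sub_eq_zero.mp (inner_self_eq_zero.mp hzero)
  · have hv'v : v' = v := by
      have hsub : v' - v ∈ Y := Y.sub_mem hv'Y' hvY
      have e1 : ⟪v' - v, ys⟫ = ⟪v' - v, v'⟫ := hconst' _ hsub ys hys
      have e2 : ⟪v' - v, ys - v⟫ = 0 := horth _ hsub _ hysv
      have hzero : ⟪v' - v, v' - v⟫ = 0 := by
        rw [inner_sub_right] at e2 ⊢
        linarith
      exact sub_eq_zero.mp (inner_self_eq_zero.mp hzero)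
    have hc'c : c' = c := by
      funext z
      have hz : (z : X) - (z : X) ∈ Y := by rw [sub_self]; exact Y.zero_mem
      have hd := hdec' (z : X) z hz
      have hvz : ⟪v, (z : X)⟫ = 0 := horth v hvY _ (SetLike.coe_mem z)
      have hzv : ⟪(z : X), v'⟫ = 0 := by
        rw [hv'v, real_inner_comm]
        exact hvz
      rw [hzv] at hd
      rw [show ((0 : ℝ) : EReal) = 0 from rfl, add_zero] at hd
      exact hd.symm
    exact heq_of_eq hc'c



end Hilbert
end
end
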